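/- arXiv:2107.06655 — 9 statements merged into one kernel-verified Lean document; each statement's English description precedes it below -/
import Mathlib

section
/- For all natural numbers n ≥ 1, d with 0 ≤ d ≤ n, and k with 0 ≤ k ≤ d, we have ∑_{s=0}^{k} S₂(n−s, d−s)·(d−s)·S₁(d−s, k−s) = ∑_{s=0}^{k} (−1)^s · S₂(n−s, d) · S₁(d+1, k−s), where S₁(a,b) denotes the unsigned Stirling number of the first kind and S₂(a,b) the Stirling number of the second kind. -/
/-- Unsigned Stirling numbers of the first kind:
`S1 (n+1) k = n * S1 n k + S1 n (k-1)`, `S1 0 0 = 1`. -/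
def S1 : ℕ → ℕ → ℕ
  | 0, 0 => 1
  | 0, _ + 1 => 0
  | _ + 1, 0 => 0
  | n + 1, k + 1 => n * S1 n (k + 1) + S1 n k

/-- Stirling numbers of the second kind:
`S2 (n+1) k = k * S2 n k + S2 n (k-1)`, `S2 0 0 = 1`. -/
def S2 : ℕ → ℕ → ℕ
  | 0, 0 => 1
  | 0, _ + 1 => 0
  | _ + 1, 0 => 0
  | n + 1, k + 1 => (k + 1) * S2 n (k + 1) + S2 n k

open Polynomial Finset

private noncomputable def Fp (m : ℕ) : Polynomial ℤ := ∏ i ∈ Finset.range m, (X + C (i : ℤ))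

private lemma Fp_zero : Fp 0 = 1 := by simp [Fp]

private lemma Fp_succ (m : ℕ) : Fp (m + 1) = Fp m * (X + C (m : ℤ)) := by
  rw [Fp, Fp, Finset.prod_range_succ]

private lemma Fp_one : Fp 1 = X := by
  rw [Fp_succ, Fp_zero, one_mul]
  simp

private lemma S2_eq_zero : ∀ {n d : ℕ}, n < d → S2 n d = 0 := by
  intro n
  induction n with
  | zero =>
    intro d h
    cases d with
    | zero => omega
    | succ e => simp [S2]
  | succ m ih =>
    intro d h
    cases d with
    | zero => omega
    | succ e =>
      have h1 : m < e + 1 := by omega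
      have h2 : m < e := by omega
      simp [S2, ih h1, ih h2]

private lemma S2_self : ∀ n, S2 n n = 1 := by
  intro n
  induction n with
  | zero => simp [S2]
  | succ m ih => simp [S2, ih, S2_eq_zero (Nat.lt_succ_self m)]

private lemma coeff_Fp : ∀ m k, (Fp m).coeff k = (S1 m k : ℤ) := by
  intro m
  induction m with
  | zero =>
    intro k
    cases k with
    | zero => simp [Fp_zero, S1]
    | succ j => simp [Fp_zero, S1, Polynomial.coeff_one]
  | succ m ih =>
    intro k
    have h : Fp (m + 1) = Fp m * X + C (m : ℤ) * Fp m := by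
      rw [Fp_succ]; ring
    rw [h]
    cases k with
    | zero =>
      simp only [coeff_add, coeff_C_mul, ih, Polynomial.coeff_mul_X_zero]
      cases m with
      | zero => simp [S1]
      | succ j => simp [S1]
    | succ j =>
      simp only [coeff_add, coeff_C_mul, Polynomial.coeff_mul_X, ih]
      show (S1 m j : ℤ) + (m : ℤ) * (S1 m (j + 1) : ℤ) = (S1 (m + 1) (j + 1) : ℤ)
      have : S1 (m + 1) (j + 1) = m * S1 m (j + 1) + S1 m j := rfl
      rw [this]; push_cast; ring

private noncomputable def Pp (n d : ℕ) : Polynomial ℤ :=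
  ∑ s ∈ range (d + 1), C ((S2 (n - s) (d - s) * (d - s) : ℕ) : ℤ) * Fp (d - s) * X ^ s

private noncomputable def Gp (n d : ℕ) : Polynomial ℤ :=
  ∑ s ∈ range (n + 1), C ((-1 : ℤ) ^ s * (S2 (n - s) d : ℤ)) * X ^ s

private lemma Pp_zero_left : ∀ d, Pp 0 d = 0 := by
  intro d
  apply Finset.sum_eq_zero
  intro s hs
  rcases Nat.eq_zero_or_pos (d - s) with h | h
  · simp [h]
  · have h0 : (0 : ℕ) - s = 0 := by omega
    rw [h0, S2_eq_zero h]
    simp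

private lemma Pp_zero : ∀ {n d : ℕ}, n < d → Pp n d = 0 := by
  intro n d hnd
  apply Finset.sum_eq_zero
  intro s hs
  simp only [Finset.mem_range] at hs
  rcases Nat.eq_zero_or_pos (d - s) with h | h
  · simp [h]
  · have h2 : n - s < d - s := by omega
    rw [S2_eq_zero h2]
    simp

private lemma Gp_zero : ∀ {n d : ℕ}, n < d → Gp n d = 0 := by
  intro n d hnd
  apply Finset.sum_eq_zero
  intro s hs
  have : n - s < d := by omega
  rw [S2_eq_zero this]
  simp

private lemma Pp_rec (n d : ℕ) :
    Pp (n + 1) (d + 1) =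
      C ((S2 (n + 1) (d + 1) * (d + 1) : ℕ) : ℤ) * Fp (d + 1) + X * Pp n d := by
  rw [Pp, Pp, Finset.sum_range_succ', Finset.mul_sum]
  simp only [Nat.succ_sub_succ, Nat.sub_zero, pow_zero, mul_one]
  rw [add_comm]
  congr 1
  apply Finset.sum_congr rfl
  intro i hi
  ring

private lemma Gp_rec (n d : ℕ) :
    Gp (n + 1) d = C ((S2 (n + 1) d : ℕ) : ℤ) - X * Gp n d := by
  rw [Gp, Gp, Finset.sum_range_succ']
  have h1 : ∀ i ∈ Finset.range (n + 1),
      C ((-1 : ℤ) ^ (i + 1) * (S2 (n + 1 - (i + 1)) d : ℤ)) * X ^ (i + 1)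
        = -(X * (C ((-1 : ℤ) ^ i * (S2 (n - i) d : ℤ)) * X ^ i)) := by
    intro i _
    simp only [Nat.succ_sub_succ, pow_succ, map_mul, map_neg, map_one]
    ring
  rw [Finset.sum_congr rfl h1, Finset.sum_neg_distrib, ← Finset.mul_sum]
  simp only [Nat.sub_zero, pow_zero, one_mul, mul_one]
  ring

private lemma Cstar : ∀ m d, Pp m d + Pp m (d + 1) + (if d = m then X ^ (m + 1) else 0)
    = C ((S2 (m + 1) (d + 1) : ℕ) : ℤ) * Fp (d + 1) := by
  intro m
  induction m with
  | zero =>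
    intro d
    rw [Pp_zero_left, Pp_zero_left]
    cases d with
    | zero =>
      have h11 : S2 1 1 = 1 := rfl
      simp [h11, Fp_one]
    | succ e =>
      have : S2 1 (e + 2) = 0 := by
        have : (1 : ℕ) < e + 2 := by omega
        exact S2_eq_zero this
      simp [this]
  | succ m ih =>
    intro d
    cases d with
    | zero =>
      have hP0 : Pp (m + 1) 0 = 0 := by simp [Pp]
      rw [hP0, Pp_rec]
      have hPm0 : Pp m 0 = 0 := by simp [Pp]
      rw [hPm0]
      have h1 : S2 (m + 1) 1 = S2 (m + 2) 1 := by
        have : S2 (m + 2) 1 = 1 * S2 (m + 1) 1 + S2 (m + 1) 0 := rfl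
        have h0 : S2 (m + 1) 0 = 0 := rfl
        omega
      have hne : ¬ (0 = m + 1) := by omega
      simp [hne, h1]
    | succ e =>
      rw [Pp_rec, Pp_rec]
      have key := congrArg (fun p => X * p) (ih e)
      simp only [mul_add, mul_ite, mul_zero] at key
      have hXpow : X * X ^ (m + 1) = (X : Polynomial ℤ) ^ (m + 2) := by
        rw [← pow_succ']
      rw [hXpow] at key
      have hite : (if e + 1 = m + 1 then (X : Polynomial ℤ) ^ (m + 2) else 0)
          = (if e = m then (X : Polynomial ℤ) ^ (m + 2) else 0) := by
        simp
      have hF : Fp (e + 2) = Fp (e + 1) * (X + C ((e + 1 : ℕ) : ℤ)) := by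
        rw [Fp_succ]
      have hS : ((S2 (m + 2) (e + 2) : ℕ) : ℤ)
          = ((e + 2 : ℕ) : ℤ) * ((S2 (m + 1) (e + 2) : ℕ) : ℤ)
            + ((S2 (m + 1) (e + 1) : ℕ) : ℤ) := by
        have : S2 (m + 2) (e + 2) = (e + 2) * S2 (m + 1) (e + 2) + S2 (m + 1) (e + 1) := rfl
        rw [this]; push_cast; ring
      rw [hite]
      calc C ((S2 (m + 1) (e + 1) * (e + 1) : ℕ) : ℤ) * Fp (e + 1) + X * Pp m e +
            (C ((S2 (m + 1) (e + 2) * (e + 2) : ℕ) : ℤ) * Fp (e + 2) + X * Pp m (e + 1)) +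
            (if e = m then (X : Polynomial ℤ) ^ (m + 2) else 0)
          = C ((S2 (m + 1) (e + 1) * (e + 1) : ℕ) : ℤ) * Fp (e + 1)
            + C ((S2 (m + 1) (e + 2) * (e + 2) : ℕ) : ℤ) * Fp (e + 2)
            + (X * Pp m e + X * Pp m (e + 1)
              + (if e = m then (X : Polynomial ℤ) ^ (m + 2) else 0)) := by ring
        _ = C ((S2 (m + 1) (e + 1) * (e + 1) : ℕ) : ℤ) * Fp (e + 1)
            + C ((S2 (m + 1) (e + 2) * (e + 2) : ℕ) : ℤ) * Fp (e + 2)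
            + X * (C ((S2 (m + 1) (e + 1) : ℕ) : ℤ) * Fp (e + 1)) := by
              rw [← key]
        _ = C ((S2 (m + 2) (e + 2) : ℕ) : ℤ) * Fp (e + 2) := by
              rw [hF, hS]
              push_cast
              try simp only [Nat.cast_add, Nat.cast_mul, Nat.cast_one, Nat.cast_ofNat, map_add, map_mul, map_one, map_ofNat]
              try ring

private lemma Ckey (n d : ℕ) :
    Pp (n + 1) d + X * Pp n d + (if d = n + 1 then X ^ (n + 2) else 0)
      = C ((S2 (n + 1) d : ℕ) : ℤ) * Fp (d + 1) := by
  cases d with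
  | zero =>
    have h0 : Pp (n + 1) 0 = 0 := by simp [Pp]
    have h1 : Pp n 0 = 0 := by simp [Pp]
    have h2 : S2 (n + 1) 0 = 0 := rfl
    have hne : ¬ (0 = n + 1) := by omega
    simp [h0, h1, h2, hne]
  | succ e =>
    rw [Pp_rec]
    have key := congrArg (fun p => X * p) (Cstar n e)
    simp only [mul_add, mul_ite, mul_zero] at key
    have hXpow : X * X ^ (n + 1) = (X : Polynomial ℤ) ^ (n + 2) := by rw [← pow_succ']
    rw [hXpow] at key
    have hite : (if e + 1 = n + 1 then (X : Polynomial ℤ) ^ (n + 2) else 0)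
        = (if e = n then (X : Polynomial ℤ) ^ (n + 2) else 0) := by simp
    rw [hite]
    have hF : Fp (e + 2) = Fp (e + 1) * (X + C ((e + 1 : ℕ) : ℤ)) := by
      rw [Fp_succ]
    calc C ((S2 (n + 1) (e + 1) * (e + 1) : ℕ) : ℤ) * Fp (e + 1) + X * Pp n e
          + X * Pp n (e + 1) + (if e = n then (X : Polynomial ℤ) ^ (n + 2) else 0)
        = C ((S2 (n + 1) (e + 1) * (e + 1) : ℕ) : ℤ) * Fp (e + 1)
          + (X * Pp n e + X * Pp n (e + 1)
            + (if e = n then (X : Polynomial ℤ) ^ (n + 2) else 0)) := by ring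
      _ = C ((S2 (n + 1) (e + 1) * (e + 1) : ℕ) : ℤ) * Fp (e + 1)
          + X * (C ((S2 (n + 1) (e + 1) : ℕ) : ℤ) * Fp (e + 1)) := by rw [← key]
      _ = C ((S2 (n + 1) (e + 1) : ℕ) : ℤ) * Fp (e + 2) := by
          rw [hF]
          push_cast
          try simp only [Nat.cast_add, Nat.cast_mul, Nat.cast_one, Nat.cast_ofNat, map_add, map_mul, map_one, map_ofNat]
          try ring

private lemma MainId : ∀ n d, d ≤ n →
    Fp (d + 1) * Gp n d = Pp n d + C ((-1 : ℤ) ^ (n - d)) * X ^ (n + 1) := by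
  intro n
  induction n with
  | zero =>
    intro d hd
    interval_cases d
    have hG : Gp 0 0 = C ((1 : ℤ)) := by
      simp [Gp, S2]
    rw [hG, Pp_zero_left]
    simp [Fp_one]
  | succ n ih =>
    intro d hd
    rw [Gp_rec]
    rcases Nat.lt_or_ge d (n + 1) with hdn | hdn
    · have hdn' : d ≤ n := by omega
      have hih := ih d hdn'
      have hkey := Ckey (n := n) (d := d)
      have hne : ¬ (d = n + 1) := by omega
      rw [if_neg hne, add_zero] at hkey
      have hsub : n + 1 - d = (n - d) + 1 := by omega
      have hstep : Fp (d + 1) * (C ((S2 (n + 1) d : ℕ) : ℤ) - X * Gp n d)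
          = C ((S2 (n + 1) d : ℕ) : ℤ) * Fp (d + 1) - X * (Fp (d + 1) * Gp n d) := by ring
      rw [hstep, hih, hsub, ← hkey]
      simp only [pow_succ, map_mul, map_neg, map_one]
      ring
    · have hdeq : d = n + 1 := by omega
      subst hdeq
      rw [Gp_zero (Nat.lt_succ_self n)]
      simp only [mul_zero, sub_zero]
      have hkey := Ckey (n := n) (d := n + 1)
      rw [if_pos rfl, Pp_zero (Nat.lt_succ_self n), mul_zero, add_zero, S2_self,
        Nat.cast_one, map_one, one_mul] at hkey
      have hz : n + 1 - (n + 1) = 0 := by omega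
      rw [hz, pow_zero, map_one, one_mul, ← hkey, S2_self, Nat.cast_one, map_one, mul_one]

private lemma coeff_Pp (n d k : ℕ) (hk : k ≤ d) :
    (Pp n d).coeff k =
      ∑ s ∈ Finset.range (k + 1),
        ((S2 (n - s) (d - s) : ℤ) * ((d - s : ℕ) : ℤ) * (S1 (d - s) (k - s) : ℤ)) := by
  rw [Pp, Polynomial.finset_sum_coeff]
  rw [← Finset.sum_subset (Finset.range_subset_range.mpr (by omega : k + 1 ≤ d + 1))]
  · apply Finset.sum_congr rfl
    intro s hs
    simp only [Finset.mem_range] at hs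
    have hsk : s ≤ k := by omega
    rw [mul_assoc, Polynomial.coeff_C_mul, Polynomial.coeff_mul_X_pow' (Fp (d - s)) s k,
      if_pos hsk, coeff_Fp]
    push_cast
    ring
  · intro s hs1 hs2
    simp only [Finset.mem_range] at hs1 hs2
    have hsk : ¬ (s ≤ k) := by omega
    rw [mul_assoc, Polynomial.coeff_C_mul, Polynomial.coeff_mul_X_pow' (Fp (d - s)) s k,
      if_neg hsk, mul_zero]

private lemma coeff_FG (n d k : ℕ) (hk : k ≤ n) :
    (Fp (d + 1) * Gp n d).coeff k =
      ∑ s ∈ Finset.range (k + 1),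
        (-1 : ℤ) ^ s * (S2 (n - s) d : ℤ) * (S1 (d + 1) (k - s) : ℤ) := by
  have hexp : Fp (d + 1) * Gp n d
      = ∑ s ∈ range (n + 1),
          C ((-1 : ℤ) ^ s * (S2 (n - s) d : ℤ)) * Fp (d + 1) * X ^ s := by
    rw [Gp, Finset.mul_sum]
    apply Finset.sum_congr rfl
    intro s hs
    ring
  rw [hexp, Polynomial.finset_sum_coeff]
  rw [← Finset.sum_subset (Finset.range_subset_range.mpr (by omega : k + 1 ≤ n + 1))]
  · apply Finset.sum_congr rfl
    intro s hs
    simp only [Finset.mem_range] at hs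
    have hsk : s ≤ k := by omega
    rw [mul_assoc, Polynomial.coeff_C_mul, Polynomial.coeff_mul_X_pow' (Fp (d + 1)) s k,
      if_pos hsk, coeff_Fp]
    try ring
  · intro s hs1 hs2
    simp only [Finset.mem_range] at hs1 hs2
    have hsk : ¬ (s ≤ k) := by omega
    rw [mul_assoc, Polynomial.coeff_C_mul, Polynomial.coeff_mul_X_pow' (Fp (d + 1)) s k,
      if_neg hsk, mul_zero]

set_option linter.unusedVariables false in
theorem stirling_identity_first (n d k : ℕ) (hn : 1 ≤ n) (hd : d ≤ n) (hk : k ≤ d) :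
    ∑ s ∈ Finset.range (k + 1),
        ((S2 (n - s) (d - s) : ℤ) * (d - s) * S1 (d - s) (k - s)) =
    ∑ s ∈ Finset.range (k + 1),
        (-1 : ℤ) ^ s * S2 (n - s) d * S1 (d + 1) (k - s) := by
  have hmain := MainId n d hd
  have hco := congrArg (fun p => p.coeff k) hmain
  simp only [Polynomial.coeff_add, Polynomial.coeff_C_mul, Polynomial.coeff_X_pow] at hco
  have hkn : ¬ (k = n + 1) := by omega
  rw [if_neg hkn, mul_zero, add_zero] at hco
  rw [coeff_FG n d k (le_trans hk hd), coeff_Pp n d k hk] at hco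
  have h1 : ∑ s ∈ Finset.range (k + 1),
        ((S2 (n - s) (d - s) : ℤ) * (d - s) * S1 (d - s) (k - s)) =
      ∑ s ∈ Finset.range (k + 1),
        ((S2 (n - s) (d - s) : ℤ) * ((d - s : ℕ) : ℤ) * (S1 (d - s) (k - s) : ℤ)) := by
    apply Finset.sum_congr rfl
    intro s hs
    simp only [Finset.mem_range] at hs
    rw [Nat.cast_sub (by omega : s ≤ d)]
  rw [h1]
  exact hco.symm
end

section
/- For all natural numbers n ≥ 1, d with 0 ≤ d ≤ n, and k with 0 ≤ k ≤ d, we have ∑_{s=0}^{k} (−1)^s · S₂(n−s, d) · S₁(d+1, k−s) = ∑_{s=0}^{d−k} (−1)^s · S₂(n+1, d−s) · S₁(d−s, k), where S₁ is the unsigned Stirling number of the first kind and S₂ the Stirling number of the second kind. -/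
lemma S1_rec (n k : ℕ) : S1 (n+1) (k+1) = n * S1 n (k+1) + S1 n k := rfl
lemma S2_rec (n k : ℕ) : S2 (n+1) (k+1) = (k+1) * S2 n (k+1) + S2 n k := rfl
lemma S1_succ_zero (n : ℕ) : S1 (n+1) 0 = 0 := rfl
lemma S2_succ_zero (n : ℕ) : S2 (n+1) 0 = 0 := rfl

lemma S1_self (n : ℕ) : S1 n n = 1 := by
  induction n with
  | zero => rfl
  | succ m ih =>
    rw [S1_rec, ih]
    have : S1 m (m+1) = 0 := by
      clear ih
      induction m with
      | zero => rfl
      | succ p ihp =>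
        rw [S1_rec, ihp]
        have : S1 p (p+2) = 0 := by
          have h : ∀ q r, q + 1 ≤ r → S1 q r = 0 := by
            intro q
            induction q with
            | zero => intro r hr; cases r with
              | zero => omega
              | succ t => rfl
            | succ t iht =>
              intro r hr
              cases r with
              | zero => omega
              | succ u =>
                rw [S1_rec, iht u (by omega), iht (u+1) (by omega)]; simp
          exact h p (p+2) (by omega)
        rw [this]; simp
    rw [this]; ring

def Ls (n d k : ℕ) : ℤ :=
  ∑ s ∈ Finset.range (k + 1), (-1 : ℤ) ^ s * S2 (n - s) d * S1 (d + 1) (k - s)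

def Rs (n d k : ℕ) : ℤ :=
  ∑ s ∈ Finset.range (d - k + 1), (-1 : ℤ) ^ s * S2 (n + 1) (d - s) * S1 (d - s) k

lemma Lrec (n d k : ℕ) :
    Ls (n+1) d (k+1) = (S2 (n+1) d : ℤ) * S1 (d+1) (k+1) - Ls n d k := by
  unfold Ls
  rw [Finset.sum_range_succ']
  have h : ∀ s ∈ Finset.range (k+1),
      (-1 : ℤ) ^ (s+1) * S2 (n+1 - (s+1)) d * S1 (d+1) (k+1 - (s+1)) =
      -((-1 : ℤ) ^ s * S2 (n - s) d * S1 (d+1) (k - s)) := by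
    intro s _
    have h1 : n + 1 - (s+1) = n - s := by omega
    have h2 : k + 1 - (s+1) = k - s := by omega
    rw [h1, h2, pow_succ]
    ring
  rw [Finset.sum_congr rfl h, Finset.sum_neg_distrib]
  simp
  ring

lemma Rrec (n d k : ℕ) (h : k ≤ d) :
    Rs n (d+1) k = (S2 (n+1) (d+1) : ℤ) * S1 (d+1) k - Rs n d k := by
  unfold Rs
  have hr : d + 1 - k + 1 = (d - k + 1) + 1 := by omega
  rw [hr, Finset.sum_range_succ']
  have h2 : ∀ s ∈ Finset.range (d - k + 1),
      (-1 : ℤ) ^ (s+1) * S2 (n+1) (d+1 - (s+1)) * S1 (d+1 - (s+1)) k =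
      -((-1 : ℤ) ^ s * S2 (n+1) (d - s) * S1 (d - s) k) := by
    intro s _
    have h1 : d + 1 - (s+1) = d - s := by omega
    rw [h1, pow_succ]
    ring
  rw [Finset.sum_congr rfl h2, Finset.sum_neg_distrib]
  simp
  ring

lemma claimC (d : ℕ) : ∀ n k : ℕ, k + 1 ≤ d →
    Rs (n+1) d (k+1) + Rs n d k = (S2 (n+1) d : ℤ) * S1 (d+1) (k+1) := by
  induction d with
  | zero => intro n k h; omega
  | succ e ih =>
    intro n k h
    rcases Nat.lt_or_ge k e with hke | hke
    · -- k + 1 ≤ e : use Rrec twice and ih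
      rw [Rrec (n+1) e (k+1) (by omega), Rrec n e k (by omega)]
      have hI := ih n k (by omega)
      have hS2 : (S2 (n+1+1) (e+1) : ℤ) = ((e:ℤ)+1) * S2 (n+1) (e+1) + S2 (n+1) e := by
        exact_mod_cast congrArg (Nat.cast : ℕ → ℤ) (S2_rec (n+1) e)
      have hS1 : (S1 (e+1+1) (k+1) : ℤ) = ((e:ℤ)+1) * S1 (e+1) (k+1) + S1 (e+1) k := by
        exact_mod_cast congrArg (Nat.cast : ℕ → ℤ) (S1_rec (e+1) k)
      linear_combination (S1 (e+1) (k+1) : ℤ) * hS2 - hI - (S2 (n+1) (e+1) : ℤ) * hS1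
    · -- k = e : base case d = k + 1
      have hek : e = k := by omega
      subst hek
      unfold Rs
      have h1 : e + 1 - (e + 1) + 1 = 1 := by omega
      have h2 : e + 1 - e + 1 = 2 := by omega
      rw [h1, h2, Finset.sum_range_one, Finset.sum_range_succ, Finset.sum_range_one]
      have hS2 : (S2 (n+1+1) (e+1) : ℤ) = ((e:ℤ)+1) * S2 (n+1) (e+1) + S2 (n+1) e := by
        exact_mod_cast congrArg (Nat.cast : ℕ → ℤ) (S2_rec (n+1) e)
      have hS1 : (S1 (e+1+1) (e+1) : ℤ) = ((e:ℤ)+1) * S1 (e+1) (e+1) + S1 (e+1) e := by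
        exact_mod_cast congrArg (Nat.cast : ℕ → ℤ) (S1_rec (e+1) e)
      have e0 : e + 1 - 0 = e + 1 := by omega
      have e1 : e + 1 - 1 = e := by omega
      rw [e0, e1]
      have hself1 : (S1 (e+1) (e+1) : ℤ) = 1 := by exact_mod_cast S1_self (e+1)
      have hself2 : (S1 e e : ℤ) = 1 := by exact_mod_cast S1_self e
      rw [hself1] at hS1
      rw [hself1, hself2]
      linear_combination hS2 - (S2 (n+1) (e+1) : ℤ) * hS1

lemma mainLR : ∀ k n d : ℕ, k ≤ n → k ≤ d → Ls n d k = Rs n d k := by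
  intro k
  induction k with
  | zero =>
    intro n d _ _
    unfold Ls Rs
    rw [Finset.sum_range_one]
    have hL : (S1 (d+1) 0 : ℤ) = 0 := by exact_mod_cast S1_succ_zero d
    rw [hL]
    rw [Finset.sum_eq_zero]
    · ring
    · intro s _
      rcases Nat.eq_zero_or_pos (d - s) with h0 | hpos
      · rw [h0]
        have : (S2 (n+1) 0 : ℤ) = 0 := by exact_mod_cast S2_succ_zero n
        rw [this]; ring
      · obtain ⟨m, hm⟩ := Nat.exists_eq_add_of_lt hpos
        have hm' : d - s = m + 1 := by omega
        rw [hm']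
        have : (S1 (m+1) 0 : ℤ) = 0 := by exact_mod_cast S1_succ_zero m
        rw [this]; ring
  | succ k ih =>
    intro n d hn hd
    obtain ⟨m, rfl⟩ : ∃ m, n = m + 1 := ⟨n - 1, by omega⟩
    obtain ⟨e, rfl⟩ : ∃ e, d = e + 1 := ⟨d - 1, by omega⟩
    rw [Lrec m (e+1) k, ih m (e+1) (by omega) (by omega)]
    have hC := claimC (e+1) m k (by omega)
    linarith

theorem stirling_identity_second (n d k : ℕ) (hn : 1 ≤ n) (hd : d ≤ n) (hk : k ≤ d) :
    ∑ s ∈ Finset.range (k + 1),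
        (-1 : ℤ) ^ s * S2 (n - s) d * S1 (d + 1) (k - s) =
    ∑ s ∈ Finset.range (d - k + 1),
        (-1 : ℤ) ^ s * S2 (n + 1) (d - s) * S1 (d - s) k := by
  exact mainLR k n d (hk.trans hd) hk
end

section
/- For all natural numbers n ≥ 1, d with 0 ≤ d ≤ n, and k with 0 ≤ k ≤ d, we have ∑_{s=0}^{k} S₂(n−s, d−s)·(d−s)·S₁(d−s, k−s) = ∑_{s=0}^{d−k} (−1)^s · S₂(n+1, d−s) · S₁(d−s, k). -/
lemma S1_eq_zero_of_lt : ∀ n m : ℕ, n < m → S1 n m = 0 := by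
  intro n
  induction n with
  | zero =>
    intro m hm
    match m, hm with
    | m + 1, _ => rfl
  | succ n ih =>
    intro m hm
    match m, hm with
    | m + 1, hm =>
      show n * S1 n (m + 1) + S1 n m = 0
      rw [ih (m + 1) (by omega), ih m (by omega)]
      simp

lemma stirling_aux : ∀ (k d n : ℕ), d ≤ n → k ≤ d →
    ∑ s ∈ Finset.range (k + 1),
        ((S2 (n - s) (d - s) : ℤ) * (d - s) * S1 (d - s) (k - s)) =
    ∑ s ∈ Finset.range (d - k + 1),
        (-1 : ℤ) ^ s * S2 (n + 1) (d - s) * S1 (d - s) k := by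
  intro k
  induction k with
  | zero =>
    intro d n hdn hkd
    rw [Finset.sum_range_one]
    rw [Finset.sum_eq_zero]
    · rcases Nat.eq_zero_or_pos d with hd0 | hd0
      · subst hd0; simp
      · obtain ⟨d', rfl⟩ : ∃ d', d = d' + 1 := ⟨d - 1, by omega⟩
        have : S1 (d' + 1) 0 = 0 := rfl
        simp [this]
    · intro s hs
      have hs' : s ≤ d := by
        have := Finset.mem_range.mp hs; omega
      rcases eq_or_lt_of_le hs' with rfl | hlt
      · have h0 : s - s = 0 := by omega
        rw [h0]
        have : S2 (n + 1) 0 = 0 := rfl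
        simp [this]
      · obtain ⟨b, hb⟩ : ∃ b, d - s = b + 1 := ⟨d - s - 1, by omega⟩
        rw [hb]
        have : S1 (b + 1) 0 = 0 := rfl
        simp [this]
  | succ k IH =>
    intro d n hdn hkd
    obtain ⟨d', rfl⟩ : ∃ d', d = d' + 1 := ⟨d - 1, by omega⟩
    obtain ⟨n', rfl⟩ : ∃ n', n = n' + 1 := ⟨n - 1, by omega⟩
    have hd'n' : d' ≤ n' := by omega
    have hkd' : k ≤ d' := by omega
    rw [Finset.sum_range_succ']
    have hshift : ∑ i ∈ Finset.range (k + 1),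
        ((S2 (n' + 1 - (i + 1)) (d' + 1 - (i + 1)) : ℤ) * (↑(d' + 1) - ↑(i + 1)) *
          S1 (d' + 1 - (i + 1)) (k + 1 - (i + 1))) =
        ∑ s ∈ Finset.range (k + 1),
        ((S2 (n' - s) (d' - s) : ℤ) * (↑d' - ↑s) * S1 (d' - s) (k - s)) := by
      apply Finset.sum_congr rfl
      intro i _
      rw [show n' + 1 - (i + 1) = n' - i from by omega,
          show d' + 1 - (i + 1) = d' - i from by omega,
          show k + 1 - (i + 1) = k - i from by omega]
      push_cast
      ring_nf
    rw [hshift, IH d' n' hd'n' hkd']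
    -- now goal: RHS(n',d',k) + term0 = RHS(n'+1, d'+1, k+1)
    set m := d' - k with hm
    rw [show d' + 1 - (k + 1) = m from by omega]
    -- telescoping
    have tel := Finset.sum_range_sub'
      (fun s => (-1 : ℤ) ^ s * ((d' + 1 - s : ℕ) : ℤ) * S2 (n' + 1) (d' + 1 - s) *
        S1 (d' + 1 - s) (k + 1)) (m + 1)
    have hterm : ∀ s ∈ Finset.range (m + 1),
        (-1 : ℤ) ^ s * S2 (n' + 1 + 1) (d' + 1 - s) * S1 (d' + 1 - s) (k + 1)
          - (-1 : ℤ) ^ s * S2 (n' + 1) (d' - s) * S1 (d' - s) k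
        = (fun s => (-1 : ℤ) ^ s * ((d' + 1 - s : ℕ) : ℤ) * S2 (n' + 1) (d' + 1 - s) *
            S1 (d' + 1 - s) (k + 1)) s
          - (fun s => (-1 : ℤ) ^ s * ((d' + 1 - s : ℕ) : ℤ) * S2 (n' + 1) (d' + 1 - s) *
            S1 (d' + 1 - s) (k + 1)) (s + 1) := by
      intro s hs
      have hsm : s ≤ m := by have := Finset.mem_range.mp hs; omega
      have hsd : s ≤ d' := by omega
      simp only []
      obtain ⟨b, hb⟩ : ∃ b, d' - s = b := ⟨_, rfl⟩
      have h1 : d' + 1 - s = b + 1 := by omega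
      have h2 : d' + 1 - (s + 1) = b := by omega
      rw [hb, h1, h2]
      have hS2 : S2 (n' + 1 + 1) (b + 1) = (b + 1) * S2 (n' + 1) (b + 1) + S2 (n' + 1) b := rfl
      have hS1 : S1 (b + 1) (k + 1) = b * S1 b (k + 1) + S1 b k := rfl
      rw [hS2, hS1]
      push_cast
      ring
    have hsum : ∑ s ∈ Finset.range (m + 1),
          ((-1 : ℤ) ^ s * S2 (n' + 1 + 1) (d' + 1 - s) * S1 (d' + 1 - s) (k + 1)
            - (-1 : ℤ) ^ s * S2 (n' + 1) (d' - s) * S1 (d' - s) k)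
        = ∑ s ∈ Finset.range (m + 1),
          ((fun s => (-1 : ℤ) ^ s * ((d' + 1 - s : ℕ) : ℤ) * S2 (n' + 1) (d' + 1 - s) *
            S1 (d' + 1 - s) (k + 1)) s
          - (fun s => (-1 : ℤ) ^ s * ((d' + 1 - s : ℕ) : ℤ) * S2 (n' + 1) (d' + 1 - s) *
            S1 (d' + 1 - s) (k + 1)) (s + 1)) := Finset.sum_congr rfl hterm
    rw [tel] at hsum
    rw [Finset.sum_sub_distrib] at hsum
    rw [show d' + 1 - (m + 1) = k from by omega,
        S1_eq_zero_of_lt k (k + 1) (by omega)] at hsum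
    simp only [Nat.sub_zero, pow_zero, one_mul, Nat.cast_zero, mul_zero, sub_zero] at hsum
    simp only [Nat.sub_zero, Nat.cast_zero, sub_zero]
    push_cast at hsum ⊢
    linarith [hsum]

theorem stirling_identity_third (n d k : ℕ) (hn : 1 ≤ n) (hd : d ≤ n) (hk : k ≤ d) :
    ∑ s ∈ Finset.range (k + 1),
        ((S2 (n - s) (d - s) : ℤ) * (d - s) * S1 (d - s) (k - s)) =
    ∑ s ∈ Finset.range (d - k + 1),
        (-1 : ℤ) ^ s * S2 (n + 1) (d - s) * S1 (d - s) k := by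
  exact stirling_aux k d n hd hk
end

section
/- Let (A(n,k))_{n∈ℕ, k∈ℤ} and (B(n,k))_{n∈ℕ, k∈ℕ} be families of real numbers with A(n,k) = 0 for k > n and B(n,k) = 0 for k > n, satisfying A(n+2,k) − A(n,k) = (n+1)²·A(n,k−2) for all n ≥ 0, k ∈ ℤ, and B(n,k) − B(n,k+2) = (k+1)²·B(n+2,k+2) for all n ≥ 1, k ≥ 0. Then for all n ≥ 1, 1 ≤ d ≤ n and 3 ≤ k ≤ d+1: ∑_{s even, 0 ≤ s ≤ d−k} B(n, d−s)·(d−s−1)²·A(d−s−2, k−2) = ∑_{s even, 0 ≤ s ≤ d−k} B(n+s, d)·A(d, k+s). -/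
private lemma split_sum (k e : ℕ) (hk : k ≤ e) (F : ℕ → ℝ) :
    ∑ s ∈ (Finset.range (e + 2 + 1)).filter (fun s => Even s ∧ k + s ≤ e + 2), F s
      = F 0 + ∑ s ∈ (Finset.range (e + 1)).filter (fun s => Even s ∧ k + s ≤ e), F (s + 2) := by
  have h0 : (0 : ℕ) ∉ ((Finset.range (e + 1)).filter (fun s => Even s ∧ k + s ≤ e)).image
      (· + 2) := by
    simp
  have hset : (Finset.range (e + 2 + 1)).filter (fun s => Even s ∧ k + s ≤ e + 2)
      = insert 0 (((Finset.range (e + 1)).filter (fun s => Even s ∧ k + s ≤ e)).image (· + 2)) := by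
    ext s
    simp only [Finset.mem_filter, Finset.mem_range, Finset.mem_insert, Finset.mem_image,
      Nat.even_iff]
    constructor
    · rintro ⟨h1, h2, h3⟩
      rcases Nat.eq_zero_or_pos s with h | h
      · exact Or.inl h
      · exact Or.inr ⟨s - 2, ⟨by omega, by omega, by omega⟩, by omega⟩
    · rintro (rfl | ⟨a, ⟨h1, h2, h3⟩, rfl⟩)
      · exact ⟨by omega, by omega, by omega⟩
      · exact ⟨by omega, by omega, by omega⟩
  rw [hset, Finset.sum_insert h0, Finset.sum_image (by intro a _ b _ h; simp only at h; omega)]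

private lemma key_lemma (A : ℕ → ℤ → ℝ) (B : ℕ → ℕ → ℝ)
    (hA0 : ∀ (n : ℕ) (k : ℤ), (n : ℤ) < k → A n k = 0)
    (hA : ∀ (n : ℕ) (k : ℤ), A (n + 2) k - A n k = ((n : ℝ) + 1) ^ 2 * A n (k - 2))
    (hB : ∀ n k : ℕ, 1 ≤ n → B n k - B n (k + 2) = ((k : ℝ) + 1) ^ 2 * B (n + 2) (k + 2))
    (n k : ℕ) (hn : 1 ≤ n) (hk3 : 3 ≤ k) :
    ∀ d, 1 ≤ d → d ≤ n → k ≤ d + 1 →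
    ∑ s ∈ (Finset.range (d + 1)).filter (fun s => Even s ∧ k + s ≤ d),
        B n (d - s) * (((d - s : ℕ) : ℝ) - 1) ^ 2 * A (d - s - 2) ((k : ℤ) - 2) =
    ∑ s ∈ (Finset.range (d + 1)).filter (fun s => Even s ∧ k + s ≤ d),
        B (n + s) d * A d ((k : ℤ) + s) := by
  intro d
  induction d using Nat.strong_induction_on with
  | _ d ih =>
  intro hd1 hdn hkd
  by_cases hdk : d < k
  · -- empty filter
    have he : (Finset.range (d + 1)).filter (fun s => Even s ∧ k + s ≤ d) = ∅ := by
      apply Finset.filter_eq_empty_iff.mpr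
      intro s _
      rintro ⟨_, h⟩
      omega
    rw [he]
    simp
  · by_cases hdk2 : d ≤ k + 1
    · -- base case: filter = {0}
      have hone : (Finset.range (d + 1)).filter (fun s => Even s ∧ k + s ≤ d) = {0} := by
        ext s
        simp only [Finset.mem_filter, Finset.mem_range, Finset.mem_singleton, Nat.even_iff]
        omega
      rw [hone, Finset.sum_singleton, Finset.sum_singleton]
      have h1 := hA (d - 2) (k : ℤ)
      have h2 : d - 2 + 2 = d := by omega
      rw [h2] at h1
      have h3 : A (d - 2) (k : ℤ) = 0 := hA0 _ _ (by omega)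
      have hc : ((d - 2 : ℕ) : ℝ) = (d : ℝ) - 2 := by
        rw [Nat.cast_sub (by omega : 2 ≤ d)]; norm_num
      rw [h3, hc] at h1
      simp only [Nat.sub_zero, add_zero, Nat.cast_zero]
      linear_combination (-(B n d)) * h1
    · -- recursive case : k + 2 ≤ d
      obtain ⟨e, rfl⟩ : ∃ e, d = e + 2 := ⟨d - 2, by omega⟩
      have hke : k ≤ e := by omega
      have IH := ih e (by omega) (by omega) (by omega) (by omega)
      set T := (Finset.range (e + 1)).filter (fun s => Even s ∧ k + s ≤ e) with hT
      set c : ℝ := (e : ℝ) + 1 with hc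
      -- LHS split
      have hL := split_sum k e hke
        (fun s => B n (e + 2 - s) * (((e + 2 - s : ℕ) : ℝ) - 1) ^ 2 *
          A (e + 2 - s - 2) ((k : ℤ) - 2))
      have hLsmall : ∑ s ∈ T, B n (e + 2 - (s + 2)) * (((e + 2 - (s + 2) : ℕ) : ℝ) - 1) ^ 2 *
          A (e + 2 - (s + 2) - 2) ((k : ℤ) - 2)
          = ∑ s ∈ T, B n (e - s) * (((e - s : ℕ) : ℝ) - 1) ^ 2 * A (e - s - 2) ((k : ℤ) - 2) := by
        apply Finset.sum_congr rfl
        intro s hs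
        have h1 : e + 2 - (s + 2) = e - s := by omega
        rw [h1]
      -- RHS step A: expand A (e+2)
      have hAexp : ∀ s : ℕ, A (e + 2) ((k : ℤ) + s)
          = A e ((k : ℤ) + s) + c ^ 2 * A e ((k : ℤ) + s - 2) := by
        intro s
        have := hA e ((k : ℤ) + s)
        rw [hc]; linarith
      have hRA : ∑ s ∈ (Finset.range (e + 2 + 1)).filter (fun s => Even s ∧ k + s ≤ e + 2),
            B (n + s) (e + 2) * A (e + 2) ((k : ℤ) + s)
          = (∑ s ∈ (Finset.range (e + 2 + 1)).filter (fun s => Even s ∧ k + s ≤ e + 2),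
              B (n + s) (e + 2) * A e ((k : ℤ) + s))
            + ∑ s ∈ (Finset.range (e + 2 + 1)).filter (fun s => Even s ∧ k + s ≤ e + 2),
              B (n + s) (e + 2) * (c ^ 2 * A e ((k : ℤ) + s - 2)) := by
        rw [← Finset.sum_add_distrib]
        apply Finset.sum_congr rfl
        intro s _
        rw [hAexp s]; ring
      -- Sigma2 split
      have hS2 := split_sum k e hke
        (fun s => B (n + s) (e + 2) * (c ^ 2 * A e ((k : ℤ) + s - 2)))
      have hS2small : ∑ s ∈ T, B (n + (s + 2)) (e + 2) * (c ^ 2 * A e ((k : ℤ) + (s + 2 : ℕ) - 2))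
          = ∑ s ∈ T, c ^ 2 * (B (n + s + 2) (e + 2) * A e ((k : ℤ) + s)) := by
        apply Finset.sum_congr rfl
        intro s hs
        have h1 : ((k : ℤ) + (s + 2 : ℕ) - 2) = (k : ℤ) + s := by push_cast; ring
        rw [h1]
        have h2 : n + (s + 2) = n + s + 2 := by omega
        rw [h2]; ring
      -- Sigma1 restriction to T
      have hsub : T ⊆ (Finset.range (e + 2 + 1)).filter (fun s => Even s ∧ k + s ≤ e + 2) := by
        intro s hs
        simp only [hT, Finset.mem_filter, Finset.mem_range, Nat.even_iff] at hs ⊢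
        omega
      have hS1 : ∑ s ∈ (Finset.range (e + 2 + 1)).filter (fun s => Even s ∧ k + s ≤ e + 2),
            B (n + s) (e + 2) * A e ((k : ℤ) + s)
          = ∑ s ∈ T, B (n + s) (e + 2) * A e ((k : ℤ) + s) := by
        symm
        apply Finset.sum_subset hsub
        intro s hs hns
        simp only [hT, Finset.mem_filter, Finset.mem_range, Nat.even_iff] at hs hns
        have hz : A e ((k : ℤ) + s) = 0 := by
          apply hA0
          omega
        rw [hz, mul_zero]
      -- per-term hB on Sigma1-small
      have hS1T : ∑ s ∈ T, B (n + s) (e + 2) * A e ((k : ℤ) + s)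
          = (∑ s ∈ T, B (n + s) e * A e ((k : ℤ) + s))
            - ∑ s ∈ T, c ^ 2 * (B (n + s + 2) (e + 2) * A e ((k : ℤ) + s)) := by
        rw [← Finset.sum_sub_distrib]
        apply Finset.sum_congr rfl
        intro s _
        have hb := hB (n + s) e (by omega)
        rw [hc]
        linear_combination (-(A e ((k : ℤ) + s))) * hb
      -- assemble
      rw [hL, hRA, hS1, hS1T, hS2, hLsmall]
      rw [hS2small]
      simp only [Nat.add_zero, Nat.sub_zero, Nat.cast_zero, add_zero]
      have hcast : ((e + 2 : ℕ) : ℝ) - 1 = c := by push_cast [hc]; ring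
      have hF0 : B n (e + 2) * (((e + 2 : ℕ) : ℝ) - 1) ^ 2 * A (e + 2 - 2) ((k : ℤ) - 2)
          = B n (e + 2) * (c ^ 2 * A e ((k : ℤ) - 2)) := by
        have : e + 2 - 2 = e := by omega
        rw [this, hcast]
        norm_num
        ring
      linear_combination IH + hF0

theorem identity_A_B_first
    (A : ℕ → ℤ → ℝ) (B : ℕ → ℕ → ℝ)
    (hA0 : ∀ (n : ℕ) (k : ℤ), (n : ℤ) < k → A n k = 0)
    (hB0 : ∀ n k : ℕ, n < k → B n k = 0)
    (hA : ∀ (n : ℕ) (k : ℤ), A (n + 2) k - A n k = ((n : ℝ) + 1) ^ 2 * A n (k - 2))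
    (hB : ∀ n k : ℕ, 1 ≤ n → B n k - B n (k + 2) = ((k : ℝ) + 1) ^ 2 * B (n + 2) (k + 2))
    (n d k : ℕ) (hn : 1 ≤ n) (hd1 : 1 ≤ d) (hdn : d ≤ n) (hk3 : 3 ≤ k) (hkd : k ≤ d + 1) :
    ∑ s ∈ (Finset.range (d + 1)).filter (fun s => Even s ∧ k + s ≤ d),
        B n (d - s) * (((d - s : ℕ) : ℝ) - 1) ^ 2 * A (d - s - 2) ((k : ℤ) - 2) =
    ∑ s ∈ (Finset.range (d + 1)).filter (fun s => Even s ∧ k + s ≤ d),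
        B (n + s) d * A d ((k : ℤ) + s) := by
  exact key_lemma A B hA0 hA hB n k hn hk3 d hd1 hdn hkd
end

section
/- Let (A(n,k)) and (B(n,k)) be real arrays with A(n,k) = 0 for k > n and B(n,k) = 0 for k > n, satisfying A(n+2,k) − A(n,k) = (n+1)²·A(n,k−2) for all n ≥ 0, k ∈ ℤ, and B(n,k) − B(n,k+2) = (k+1)²·B(n+2,k+2) for all n ≥ 1, k ≥ 0. Then for all n ≥ 3, d ≥ 1 and k ≥ 1 with d ≤ n: ∑_{s even, 2 ≤ s ≤ n−d} B(n, d+s)·(d+s−1)²·A(d+s−2, k−2) = ∑_{s even, 2 ≤ s ≤ n−d} B(n−s, d)·A(d, k−s). -/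
open Finset

private lemma even_reindex (F : ℕ → ℝ) (T : ℕ) :
    ∑ s ∈ (Finset.range (2*T+3)).filter (fun s => Even s ∧ 2 ≤ s), F s
      = ∑ t ∈ Finset.range (T+1), F (2*t+2) := by
  refine Finset.sum_nbij' (fun s => s / 2 - 1) (fun t => 2*t+2) ?_ ?_ ?_ ?_ ?_
  all_goals intro a ha
  all_goals simp only [Finset.mem_filter, Finset.mem_range, Nat.even_iff] at ha ⊢
  · omega
  · omega
  · omega
  · omega
  · congr 1
    omega

private lemma l_ext (A : ℕ → ℤ → ℝ) (B : ℕ → ℕ → ℝ)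
    (hB0 : ∀ n k : ℕ, n < k → B n k = 0)
    (n d : ℕ) (k : ℤ) (M M' : ℕ) (hMM' : M ≤ M') (h : n < d + 2*M + 2) :
    ∑ t ∈ Finset.range M', B n (d+2*t+2) * (A (d+2*t+2) k - A (d+2*t) k)
      = ∑ t ∈ Finset.range M, B n (d+2*t+2) * (A (d+2*t+2) k - A (d+2*t) k) := by
  symm
  apply Finset.sum_subset (Finset.range_subset_range.2 hMM')
  intro t _ ht
  rw [Finset.mem_range, not_lt] at ht
  rw [hB0 n (d+2*t+2) (by omega), zero_mul]

private lemma r_ext (A : ℕ → ℤ → ℝ) (B : ℕ → ℕ → ℝ)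
    (hB0 : ∀ n k : ℕ, n < k → B n k = 0)
    (n d : ℕ) (hd : 1 ≤ d) (k : ℤ) (M M' : ℕ) (hMM' : M ≤ M') (h : n < 2*M + 2 + d) :
    ∑ t ∈ Finset.range M', B (n-(2*t+2)) d * A d (k - (2*(t:ℤ)+2))
      = ∑ t ∈ Finset.range M, B (n-(2*t+2)) d * A d (k - (2*(t:ℤ)+2)) := by
  symm
  apply Finset.sum_subset (Finset.range_subset_range.2 hMM')
  intro t _ ht
  rw [Finset.mem_range, not_lt] at ht
  rw [hB0 (n-(2*t+2)) d (by omega), zero_mul]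

private lemma stepL (A : ℕ → ℤ → ℝ) (B : ℕ → ℕ → ℝ)
    (hB0 : ∀ n k : ℕ, n < k → B n k = 0)
    (hA : ∀ (n : ℕ) (k : ℤ), A (n + 2) k - A n k = ((n : ℝ) + 1) ^ 2 * A n (k - 2))
    (hB : ∀ n k : ℕ, 1 ≤ n → B n k - B n (k + 2) = ((k : ℝ) + 1) ^ 2 * B (n + 2) (k + 2))
    (n d : ℕ) (hn : 1 ≤ n) (hd : 1 ≤ d) (k : ℤ) :
    ∑ t ∈ Finset.range (n+2), B (n+2) (d+2*t+2) * (A (d+2*t+2) k - A (d+2*t) k)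
      = (∑ t ∈ Finset.range (n+2), B n (d+2*t+2) * (A (d+2*t+2) (k-2) - A (d+2*t) (k-2)))
        + B n d * A d (k-2) := by
  have key : ∀ t ∈ Finset.range (n+2),
      B (n+2) (d+2*t+2) * (A (d+2*t+2) k - A (d+2*t) k)
        - B n (d+2*t+2) * (A (d+2*t+2) (k-2) - A (d+2*t) (k-2))
      = B n (d+2*t) * A (d+2*t) (k-2) - B n (d+2*(t+1)) * A (d+2*(t+1)) (k-2) := by
    intro t _
    have h1 := hA (d+2*t) k
    have h2 := hB n (d+2*t) hn
    have e : d+2*(t+1) = d+2*t+2 := by ring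
    rw [e]
    linear_combination B (n+2) (d+2*t+2) * h1 - A (d+2*t) (k-2) * h2
  have tele : ∑ t ∈ Finset.range (n+2),
      (B n (d+2*t) * A (d+2*t) (k-2) - B n (d+2*(t+1)) * A (d+2*(t+1)) (k-2))
      = B n (d+2*0) * A (d+2*0) (k-2) - B n (d+2*(n+2)) * A (d+2*(n+2)) (k-2) :=
    Finset.sum_range_sub' (fun t => B n (d+2*t) * A (d+2*t) (k-2)) (n+2)
  have hz : B n (d+2*(n+2)) = 0 := hB0 _ _ (by omega)
  have E : (∑ t ∈ Finset.range (n+2), B (n+2) (d+2*t+2) * (A (d+2*t+2) k - A (d+2*t) k))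
      - (∑ t ∈ Finset.range (n+2), B n (d+2*t+2) * (A (d+2*t+2) (k-2) - A (d+2*t) (k-2)))
      = B n d * A d (k-2) := by
    rw [← Finset.sum_sub_distrib, Finset.sum_congr rfl key, tele, hz]
    norm_num
  linarith [E]

private lemma stepR (A : ℕ → ℤ → ℝ) (B : ℕ → ℕ → ℝ) (n d : ℕ) (k : ℤ) :
    ∑ t ∈ Finset.range (n+3), B (n+2-(2*t+2)) d * A d (k - (2*(t:ℤ)+2))
      = (∑ t ∈ Finset.range (n+2), B (n-(2*t+2)) d * A d ((k-2) - (2*(t:ℤ)+2)))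
        + B n d * A d (k-2) := by
  have h1 : ∀ t ∈ Finset.range (n+2),
      B (n+2-(2*(t+1)+2)) d * A d (k - (2*((t+1:ℕ):ℤ)+2))
        = B (n-(2*t+2)) d * A d ((k-2) - (2*(t:ℤ)+2)) := by
    intro t _
    have e1 : n+2-(2*(t+1)+2) = n-(2*t+2) := by omega
    have e2 : k - (2*((t+1:ℕ):ℤ)+2) = (k-2) - (2*(t:ℤ)+2) := by push_cast; ring
    rw [e1, e2]
  rw [Finset.sum_range_succ', Finset.sum_congr rfl h1]
  norm_num

private lemma main_lemma (A : ℕ → ℤ → ℝ) (B : ℕ → ℕ → ℝ)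
    (hB0 : ∀ n k : ℕ, n < k → B n k = 0)
    (hA : ∀ (n : ℕ) (k : ℤ), A (n + 2) k - A n k = ((n : ℝ) + 1) ^ 2 * A n (k - 2))
    (hB : ∀ n k : ℕ, 1 ≤ n → B n k - B n (k + 2) = ((k : ℝ) + 1) ^ 2 * B (n + 2) (k + 2)) :
    ∀ n d : ℕ, 1 ≤ d → ∀ k : ℤ,
    ∑ t ∈ Finset.range (n+2), B n (d+2*t+2) * (A (d+2*t+2) k - A (d+2*t) k)
      = ∑ t ∈ Finset.range (n+2), B (n-(2*t+2)) d * A d (k - (2*(t:ℤ)+2)) := by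
  intro n
  induction n using Nat.strong_induction_on with
  | _ n ih =>
    intro d hd k
    by_cases hn : n ≤ 2
    · rw [Finset.sum_eq_zero (fun t _ => by rw [hB0 n (d+2*t+2) (by omega), zero_mul]),
        Finset.sum_eq_zero (fun t _ => by rw [hB0 (n-(2*t+2)) d (by omega), zero_mul])]
    · obtain ⟨m, rfl⟩ : ∃ m, n = m+3 := ⟨n-3, by omega⟩
      have hm : 1 ≤ m+1 := by omega
      calc ∑ t ∈ Finset.range (m+3+2), B (m+3) (d+2*t+2) * (A (d+2*t+2) k - A (d+2*t) k)
          = ∑ t ∈ Finset.range (m+3), B (m+3) (d+2*t+2) * (A (d+2*t+2) k - A (d+2*t) k) :=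
            l_ext A B hB0 (m+3) d k (m+3) (m+5) (by omega) (by omega)
        _ = (∑ t ∈ Finset.range (m+3), B (m+1) (d+2*t+2) * (A (d+2*t+2) (k-2) - A (d+2*t) (k-2)))
              + B (m+1) d * A d (k-2) := stepL A B hB0 hA hB (m+1) d hm hd k
        _ = (∑ t ∈ Finset.range (m+3), B (m+1-(2*t+2)) d * A d ((k-2) - (2*(t:ℤ)+2)))
              + B (m+1) d * A d (k-2) := by rw [ih (m+1) (by omega) d hd (k-2)]
        _ = ∑ t ∈ Finset.range (m+4), B (m+3-(2*t+2)) d * A d (k - (2*(t:ℤ)+2)) :=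
            (stepR A B (m+1) d k).symm
        _ = ∑ t ∈ Finset.range (m+3+2), B (m+3-(2*t+2)) d * A d (k - (2*(t:ℤ)+2)) :=
            (r_ext A B hB0 (m+3) d hd k (m+4) (m+5) (by omega) (by omega)).symm

theorem identity_A_B_second
    (A : ℕ → ℤ → ℝ) (B : ℕ → ℕ → ℝ)
    (hA0 : ∀ (n : ℕ) (k : ℤ), (n : ℤ) < k → A n k = 0)
    (hB0 : ∀ n k : ℕ, n < k → B n k = 0)
    (hA : ∀ (n : ℕ) (k : ℤ), A (n + 2) k - A n k = ((n : ℝ) + 1) ^ 2 * A n (k - 2))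
    (hB : ∀ n k : ℕ, 1 ≤ n → B n k - B n (k + 2) = ((k : ℝ) + 1) ^ 2 * B (n + 2) (k + 2))
    (n d k : ℕ) (hn : 3 ≤ n) (hd1 : 1 ≤ d) (hk1 : 1 ≤ k) (hdn : d ≤ n) :
    ∑ s ∈ (Finset.range (n - d + 1)).filter (fun s => Even s ∧ 2 ≤ s),
        B n (d + s) * (((d + s : ℕ) : ℝ) - 1) ^ 2 * A (d + s - 2) ((k : ℤ) - 2) =
    ∑ s ∈ (Finset.range (n - d + 1)).filter (fun s => Even s ∧ 2 ≤ s),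
        B (n - s) d * A d ((k : ℤ) - s) := by
  calc ∑ s ∈ (Finset.range (n - d + 1)).filter (fun s => Even s ∧ 2 ≤ s),
        B n (d + s) * (((d + s : ℕ) : ℝ) - 1) ^ 2 * A (d + s - 2) ((k : ℤ) - 2)
      = ∑ s ∈ (Finset.range (2*n+3)).filter (fun s => Even s ∧ 2 ≤ s),
        B n (d + s) * (((d + s : ℕ) : ℝ) - 1) ^ 2 * A (d + s - 2) ((k : ℤ) - 2) := by
        apply Finset.sum_subset
          (Finset.filter_subset_filter _ (Finset.range_subset_range.2 (by omega)))
        intro s hs hs2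
        simp only [Finset.mem_filter, Finset.mem_range, Nat.even_iff] at hs hs2
        rw [hB0 n (d+s) (by omega)]
        ring
    _ = ∑ s ∈ (Finset.range (2*n+3)).filter (fun s => Even s ∧ 2 ≤ s),
        B n (d + s) * (A (d+s) (k:ℤ) - A (d+s-2) (k:ℤ)) := by
        apply Finset.sum_congr rfl
        intro s hs
        simp only [Finset.mem_filter, Finset.mem_range, Nat.even_iff] at hs
        have h := hA (d+s-2) (k:ℤ)
        rw [show d+s-2+2 = d+s from by omega] at h
        have hc : ((d+s-2:ℕ):ℝ) = ((d+s:ℕ):ℝ) - 2 := by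
          rw [Nat.cast_sub (by omega : 2 ≤ d+s)]
          norm_num
        rw [h, hc]
        ring
    _ = ∑ t ∈ Finset.range (n+1),
        B n (d + (2*t+2)) * (A (d+(2*t+2)) (k:ℤ) - A (d+(2*t+2)-2) (k:ℤ)) :=
        even_reindex (fun s => B n (d + s) * (A (d+s) (k:ℤ) - A (d+s-2) (k:ℤ))) n
    _ = ∑ t ∈ Finset.range (n+1),
        B n (d+2*t+2) * (A (d+2*t+2) (k:ℤ) - A (d+2*t) (k:ℤ)) := by
        apply Finset.sum_congr rfl
        intro t _
        rw [show d+(2*t+2) = d+2*t+2 from by ring, show d+2*t+2-2 = d+2*t from by omega]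
    _ = ∑ t ∈ Finset.range (n+2),
        B n (d+2*t+2) * (A (d+2*t+2) (k:ℤ) - A (d+2*t) (k:ℤ)) :=
        (l_ext A B hB0 n d (k:ℤ) (n+1) (n+2) (by omega) (by omega)).symm
    _ = ∑ t ∈ Finset.range (n+2), B (n-(2*t+2)) d * A d ((k:ℤ) - (2*(t:ℤ)+2)) :=
        main_lemma A B hB0 hA hB n d hd1 (k:ℤ)
    _ = ∑ t ∈ Finset.range (n+1), B (n-(2*t+2)) d * A d ((k:ℤ) - (2*(t:ℤ)+2)) :=
        r_ext A B hB0 n d hd1 (k:ℤ) (n+1) (n+2) (by omega) (by omega)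
    _ = ∑ t ∈ Finset.range (n+1), B (n-(2*t+2)) d * A d ((k:ℤ) - ((2*t+2:ℕ):ℤ)) := by
        apply Finset.sum_congr rfl
        intro t _
        have e2 : (k:ℤ) - (2*(t:ℤ)+2) = (k:ℤ) - ((2*t+2:ℕ):ℤ) := by push_cast; ring
        rw [e2]
    _ = ∑ s ∈ (Finset.range (2*n+3)).filter (fun s => Even s ∧ 2 ≤ s),
        B (n - s) d * A d ((k : ℤ) - s) :=
        (even_reindex (fun s => B (n - s) d * A d ((k:ℤ) - (s:ℤ))) n).symm
    _ = ∑ s ∈ (Finset.range (n - d + 1)).filter (fun s => Even s ∧ 2 ≤ s),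
        B (n - s) d * A d ((k : ℤ) - s) := by
        symm
        apply Finset.sum_subset
          (Finset.filter_subset_filter _ (Finset.range_subset_range.2 (by omega)))
        intro s hs hs2
        simp only [Finset.mem_filter, Finset.mem_range, Nat.even_iff] at hs hs2
        rw [hB0 (n-s) d (by omega), zero_mul]
end

section
/- Define B(n,k) := (1/((k−1)!·(n−k)!)) · ∫₀^π (sin x)^{k−1} · x^{n−k} dx for integers 1 ≤ k ≤ n, and B(n,0) := B(n,1) = π^n/n!. Then for all n ≥ 1 and k ≥ 0, B(n,k) − B(n,k+2) = (k+1)²·B(n+2,k+2), where B(n,k) := 0 if k > n. -/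
open scoped Real

/-- The numbers `B{n,k}`: `B{n,k} = (1/((k-1)!(n-k)!)) ∫₀^π (sin x)^(k-1) x^(n-k) dx`
for `1 ≤ k ≤ n`, `B{n,0} = B{n,1} = π^n/n!`, and `B{n,k} = 0` for `k > n`. -/
noncomputable def Bnum (n k : ℕ) : ℝ :=
  if n < k then 0
  else if k = 0 then π ^ n / n.factorial
  else (1 / ((k - 1).factorial * (n - k).factorial)) *
    ∫ x in (0 : ℝ)..π, (Real.sin x) ^ (k - 1) * x ^ (n - k)

open MeasureTheory intervalIntegral

private lemma Bnum.intble (f : ℝ → ℝ) (hf : Continuous f) : IntervalIntegrable f volume 0 π :=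
  hf.intervalIntegrable 0 π

private lemma Bnum.lemA (j p : ℕ) :
    ((j:ℝ)+1) * (∫ x in (0:ℝ)..π, Real.sin x ^ j * x ^ p)
      - ((j:ℝ)+2) * (∫ x in (0:ℝ)..π, Real.sin x ^ (j+2) * x ^ p)
      + (p:ℝ) * (∫ x in (0:ℝ)..π, Real.sin x ^ (j+1) * Real.cos x * x ^ (p-1)) = 0 := by
  have hi1 : IntervalIntegrable (fun x => ((j:ℝ)+1) * (Real.sin x ^ j * x ^ p)) volume 0 π :=
    Bnum.intble _ (by fun_prop)
  have hi2 : IntervalIntegrable (fun x => ((j:ℝ)+2) * (Real.sin x ^ (j+2) * x ^ p)) volume 0 π :=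
    Bnum.intble _ (by fun_prop)
  have hi3 : IntervalIntegrable (fun x => (p:ℝ) * (Real.sin x ^ (j+1) * Real.cos x * x ^ (p-1))) volume 0 π :=
    Bnum.intble _ (by fun_prop)
  have key : (∫ x in (0:ℝ)..π, (((j:ℝ)+1) * (Real.sin x ^ j * x ^ p)
      - ((j:ℝ)+2) * (Real.sin x ^ (j+2) * x ^ p)
      + (p:ℝ) * (Real.sin x ^ (j+1) * Real.cos x * x ^ (p-1)))) = 0 := by
    rw [intervalIntegral.integral_eq_sub_of_hasDerivAt
      (f := fun x => Real.sin x ^ (j+1) * Real.cos x * x ^ p)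
      (fun y _ => by
        have h1 : HasDerivAt (fun x : ℝ => Real.sin x ^ (j+1))
            (((j:ℝ)+1) * Real.sin y ^ j * Real.cos y) y := by
          have := (Real.hasDerivAt_sin y).fun_pow (j+1)
          push_cast at this
          simpa using this
        have H := (h1.fun_mul (Real.hasDerivAt_cos y)).fun_mul (hasDerivAt_pow p y)
        refine H.congr_deriv (Eq.symm ?_)
        have hs := Real.sin_sq_add_cos_sq y
        push_cast
        linear_combination (-((j:ℝ)+1) * Real.sin y ^ j * y ^ p) * hs)
      ((hi1.sub hi2).add hi3)]
    simp [Real.sin_pi, zero_pow]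
  rw [intervalIntegral.integral_add (hi1.sub hi2) hi3,
    intervalIntegral.integral_sub hi1 hi2,
    intervalIntegral.integral_const_mul, intervalIntegral.integral_const_mul,
    intervalIntegral.integral_const_mul] at key
  exact key

private lemma Bnum.lemB (i q : ℕ) :
    ((i:ℝ)+1) * (∫ x in (0:ℝ)..π, Real.sin x ^ i * Real.cos x * x ^ q)
      + (q:ℝ) * (∫ x in (0:ℝ)..π, Real.sin x ^ (i+1) * x ^ (q-1)) = 0 := by
  have hi1 : IntervalIntegrable (fun x => ((i:ℝ)+1) * (Real.sin x ^ i * Real.cos x * x ^ q)) volume 0 π :=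
    Bnum.intble _ (by fun_prop)
  have hi2 : IntervalIntegrable (fun x => (q:ℝ) * (Real.sin x ^ (i+1) * x ^ (q-1))) volume 0 π :=
    Bnum.intble _ (by fun_prop)
  have key : (∫ x in (0:ℝ)..π, (((i:ℝ)+1) * (Real.sin x ^ i * Real.cos x * x ^ q)
      + (q:ℝ) * (Real.sin x ^ (i+1) * x ^ (q-1)))) = 0 := by
    rw [intervalIntegral.integral_eq_sub_of_hasDerivAt
      (f := fun x => Real.sin x ^ (i+1) * x ^ q)
      (fun y _ => by
        have h1 : HasDerivAt (fun x : ℝ => Real.sin x ^ (i+1))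
            (((i:ℝ)+1) * Real.sin y ^ i * Real.cos y) y := by
          have := (Real.hasDerivAt_sin y).fun_pow (i+1)
          push_cast at this
          simpa using this
        have H := h1.fun_mul (hasDerivAt_pow q y)
        refine H.congr_deriv (Eq.symm ?_)
        ring)
      (hi1.add hi2)]
    simp [Real.sin_pi, zero_pow]
  rw [intervalIntegral.integral_add hi1 hi2,
    intervalIntegral.integral_const_mul, intervalIntegral.integral_const_mul] at key
  exact key

private lemma Bnum.lemC (p : ℕ) (hp : 1 ≤ p) :
    -(∫ x in (0:ℝ)..π, Real.sin x ^ 1 * x ^ p)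
      + (p:ℝ) * (∫ x in (0:ℝ)..π, Real.sin x ^ 0 * Real.cos x * x ^ (p-1)) = -π ^ p := by
  have hi1 : IntervalIntegrable (fun x => -(Real.sin x ^ 1 * x ^ p)) volume 0 π :=
    Bnum.intble _ (by fun_prop)
  have hi2 : IntervalIntegrable (fun x => (p:ℝ) * (Real.sin x ^ 0 * Real.cos x * x ^ (p-1))) volume 0 π :=
    Bnum.intble _ (by fun_prop)
  have key : (∫ x in (0:ℝ)..π, (-(Real.sin x ^ 1 * x ^ p)
      + (p:ℝ) * (Real.sin x ^ 0 * Real.cos x * x ^ (p-1)))) = -π ^ p := by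
    rw [intervalIntegral.integral_eq_sub_of_hasDerivAt
      (f := fun x => Real.cos x * x ^ p)
      (fun y _ => by
        have H := (Real.hasDerivAt_cos y).fun_mul (hasDerivAt_pow p y)
        refine H.congr_deriv (Eq.symm ?_)
        ring)
      (hi1.add hi2)]
    rw [Real.cos_pi, Real.cos_zero, zero_pow (by omega)]
    ring
  rw [intervalIntegral.integral_add hi1 hi2, intervalIntegral.integral_neg,
    intervalIntegral.integral_const_mul] at key
  exact key

private lemma Bnum.keyI (j p : ℕ) :
    ((j:ℝ)+1)*((j:ℝ)+2) * (∫ x in (0:ℝ)..π, Real.sin x ^ j * x ^ p)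
      = ((j:ℝ)+2)^2 * (∫ x in (0:ℝ)..π, Real.sin x ^ (j+2) * x ^ p)
        + (p:ℝ) * ((p-1:ℕ):ℝ) * (∫ x in (0:ℝ)..π, Real.sin x ^ (j+2) * x ^ (p-2)) := by
  have hA := Bnum.lemA j p
  have hB := Bnum.lemB (j+1) (p-1)
  have e : p - 1 - 1 = p - 2 := by omega
  rw [e] at hB
  push_cast at hB
  linear_combination ((j:ℝ)+2) * hA - (p:ℝ) * hB

private lemma Bnum.key1 (p : ℕ) (hp : 1 ≤ p) :
    (∫ x in (0:ℝ)..π, Real.sin x ^ 1 * x ^ p)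
      = π ^ p - (p:ℝ) * ((p-1:ℕ):ℝ) * (∫ x in (0:ℝ)..π, Real.sin x ^ 1 * x ^ (p-2)) := by
  have hC := Bnum.lemC p hp
  have hB := Bnum.lemB 0 (p-1)
  have e : p - 1 - 1 = p - 2 := by omega
  rw [e] at hB
  push_cast at hB
  linear_combination (-1 : ℝ) * hC + (p:ℝ) * hB

theorem Bnum_recurrence (n k : ℕ) (hn : 1 ≤ n) :
    Bnum n k - Bnum n (k + 2) = ((k : ℝ) + 1) ^ 2 * Bnum (n + 2) (k + 2) := by
  rcases Nat.eq_zero_or_pos k with rfl | hk1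
  · -- k = 0
    have e0 : Bnum n 0 = π ^ n / n.factorial := by
      rw [Bnum, if_neg (by omega), if_pos rfl]
    have e2 : Bnum (n+2) 2 = (1 / (n.factorial : ℝ)) * ∫ x in (0:ℝ)..π, Real.sin x ^ 1 * x ^ n := by
      rw [Bnum, if_neg (by omega), if_neg (by omega)]
      norm_num [Nat.add_sub_cancel]
    have hkey := Bnum.key1 n hn
    rcases eq_or_lt_of_le hn with h1 | h2
    · have hn1 : n = 1 := h1.symm
      subst hn1
      have e1 : Bnum 1 2 = 0 := by rw [Bnum, if_pos (by omega)]
      rw [e0, e1, e2, hkey]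
      norm_num
    · obtain ⟨m, rfl⟩ : ∃ m, n = m + 2 := ⟨n - 2, by omega⟩
      have e1 : Bnum (m+2) 2 = (1 / (m.factorial : ℝ)) * ∫ x in (0:ℝ)..π, Real.sin x ^ 1 * x ^ m := by
        rw [Bnum, if_neg (by omega), if_neg (by omega)]
        norm_num [Nat.add_sub_cancel]
      simp only [Nat.add_sub_cancel] at hkey
      rw [e0, e1, e2, hkey]
      have e3 : ((m+2-1:ℕ):ℝ) = (m:ℝ)+1 := by
        have h : m+2-1 = m+1 := by omega
        rw [h]; push_cast; ring
      rw [e3]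
      have hm2 : ((m+2).factorial : ℝ) = ((m:ℝ)+2)*((m:ℝ)+1)*(m.factorial:ℝ) := by
        rw [Nat.factorial_succ, Nat.factorial_succ]; push_cast; ring
      have hne : (m.factorial : ℝ) ≠ 0 := Nat.cast_ne_zero.mpr (Nat.factorial_ne_zero m)
      have h1 : ((m:ℝ)+1) ≠ 0 := by positivity
      have h2 : ((m:ℝ)+2) ≠ 0 := by positivity
      rw [hm2]
      push_cast
      field_simp
      ring
  · by_cases hnk : n < k
    · have h1 : n < k + 2 := by omega
      have h2 : n + 2 < k + 2 := by omega
      simp [Bnum, hnk, h1, h2]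
    · push_neg at hnk
      obtain ⟨j, rfl⟩ : ∃ j, k = j + 1 := ⟨k-1, by omega⟩
      obtain ⟨p, rfl⟩ : ∃ p, n = j + 1 + p := ⟨n - (j+1), by omega⟩
      have ej1 : j + 1 - 1 = j := by omega
      have ep : j + 1 + p - (j + 1) = p := by omega
      have e1 : Bnum (j+1+p) (j+1)
          = (1 / ((j.factorial:ℝ) * (p.factorial:ℝ))) * ∫ x in (0:ℝ)..π, Real.sin x ^ j * x ^ p := by
        rw [Bnum, if_neg (by omega), if_neg (by omega), ej1, ep]
      have ej3 : j + 1 + 2 - 1 = j + 2 := by omega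
      have ep2 : j + 1 + p + 2 - (j + 1 + 2) = p := by omega
      have e2 : Bnum (j+1+p+2) (j+1+2)
          = (1 / (((j+2).factorial:ℝ) * (p.factorial:ℝ))) * ∫ x in (0:ℝ)..π, Real.sin x ^ (j+2) * x ^ p := by
        rw [Bnum, if_neg (by omega), if_neg (by omega), ej3, ep2]
      have hkey := Bnum.keyI j p
      have hnej : (j.factorial : ℝ) ≠ 0 := Nat.cast_ne_zero.mpr (Nat.factorial_ne_zero j)
      have hj2 : ((j+2).factorial : ℝ) = ((j:ℝ)+2)*((j:ℝ)+1)*(j.factorial:ℝ) := by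
        rw [Nat.factorial_succ, Nat.factorial_succ]; push_cast; ring
      have h1 : ((j:ℝ)+1) ≠ 0 := by positivity
      have h2 : ((j:ℝ)+2) ≠ 0 := by positivity
      by_cases hp2 : p < 2
      · have hnep : (p.factorial : ℝ) ≠ 0 := Nat.cast_ne_zero.mpr (Nat.factorial_ne_zero p)
        have e3 : Bnum (j+1+p) (j+1+2) = 0 := by rw [Bnum, if_pos (by omega)]
        have hz : (p:ℝ) * ((p-1:ℕ):ℝ) = 0 := by
          interval_cases p <;> norm_num
        rw [hz, zero_mul, add_zero] at hkey
        rw [e1, e2, e3, hj2]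
        rw [sub_zero]
        push_cast
        field_simp
        linear_combination hkey
      · obtain ⟨q, rfl⟩ : ∃ q, p = q + 2 := ⟨p - 2, by omega⟩
        have eq2 : q + 2 - 2 = q := by omega
        have eq1 : ((q+2-1:ℕ):ℝ) = (q:ℝ)+1 := by
          have h : q+2-1 = q+1 := by omega
          rw [h]; push_cast; ring
        rw [eq2, eq1] at hkey
        have ep3 : j + 1 + (q+2) - (j + 1 + 2) = q := by omega
        have e3 : Bnum (j+1+(q+2)) (j+1+2)
            = (1 / (((j+2).factorial:ℝ) * (q.factorial:ℝ))) * ∫ x in (0:ℝ)..π, Real.sin x ^ (j+2) * x ^ q := by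
          rw [Bnum, if_neg (by omega), if_neg (by omega), ej3, ep3]
        have hq2 : ((q+2).factorial : ℝ) = ((q:ℝ)+2)*((q:ℝ)+1)*(q.factorial:ℝ) := by
          rw [Nat.factorial_succ, Nat.factorial_succ]; push_cast; ring
        have hneq : (q.factorial : ℝ) ≠ 0 := Nat.cast_ne_zero.mpr (Nat.factorial_ne_zero q)
        have h3 : ((q:ℝ)+1) ≠ 0 := by positivity
        have h4 : ((q:ℝ)+2) ≠ 0 := by positivity
        rw [e1, e2, e3, hj2, hq2]
        push_cast at hkey ⊢
        field_simp
        linear_combination hkey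
end

section
/- Define, for a real parameter α > 0 and real x ∈ (−π/2, π/2), F(x) := ∫_{−π/2}^x (cos y)^α dy, and for real ν, κ with ν − κ a nonnegative integer and κ > −1/α, define B(ν,κ) := (α^{ν−κ}/(Γ(κ)·(ν−κ)!)) · ∫_{−π/2}^{π/2} (cos x)^{ακ} · (F(x))^{ν−κ} dx. Then for all such ν, κ with κ > 0 and ν − κ − 2 ∈ {−2, −1, 0, 1, 2, ...} (using the convention B(ν,κ) = 0 when ν − κ is a negative integer): B(ν, κ+2) + B(ν, κ) = ((κ − 1/α)·Γ(κ − 2/α)/Γ(κ+1)) · B(ν − 2/α, κ − 2/α), provided κ − 2/α > 0. -/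
open scoped Real

/-- `F(x) = ∫_{-π/2}^x (cos y)^α dy`. -/
noncomputable def Fint (α x : ℝ) : ℝ := ∫ y in (-(π / 2))..x, (Real.cos y) ^ α

lemma cont_cos_rpow {p : ℝ} (hp : 0 ≤ p) : Continuous (fun x : ℝ => Real.cos x ^ p) :=
  Real.continuous_cos.rpow_const (fun _ => Or.inr hp)

lemma Fint_hasDerivAt (α : ℝ) (hα : 0 < α) (x : ℝ) :
    HasDerivAt (Fint α) (Real.cos x ^ α) x :=
  ((cont_cos_rpow hα.le).integral_hasStrictDerivAt _ x).hasDerivAt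

lemma Fint_continuous (α : ℝ) (hα : 0 < α) : Continuous (Fint α) :=
  continuous_iff_continuousAt.2 fun x => (Fint_hasDerivAt α hα x).continuousAt

lemma key (α a : ℝ) (hα : 0 < α) (ha : 2 < a) (j : ℕ) :
    (a-1)*(a+α) * ∫ x in (-(π/2))..(π/2), Real.cos x ^ (a-2) * Fint α x ^ j
    = a*(a+α) * (∫ x in (-(π/2))..(π/2), Real.cos x ^ a * Fint α x ^ j)
      + (j : ℝ) * ((j-1 : ℕ) : ℝ) *
        ∫ x in (-(π/2))..(π/2), Real.cos x ^ (a+2*α) * Fint α x ^ (j-2) := by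
  have hπ : (-(π/2) : ℝ) ≤ π/2 := by
    have := Real.pi_pos; linarith
  set g : ℝ → ℝ := fun x => (a+α) * (Real.sin x * Real.cos x ^ (a-1) * Fint α x ^ j)
    + (j : ℝ) * (Real.cos x ^ (a+α) * Fint α x ^ (j-1)) with hg_def
  set g' : ℝ → ℝ := fun x =>
      a*(a+α) * (Real.cos x ^ a * Fint α x ^ j)
      - (a-1)*(a+α) * (Real.cos x ^ (a-2) * Fint α x ^ j)
      + (j : ℝ) * ((j-1 : ℕ) : ℝ) * (Real.cos x ^ (a+2*α) * Fint α x ^ (j-2)) with hg'_def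
  have hFc := Fint_continuous α hα
  have hcont1 : Continuous (fun x => Real.cos x ^ a * Fint α x ^ j) :=
    (cont_cos_rpow (by linarith)).mul (hFc.pow j)
  have hcont0 : Continuous (fun x => Real.cos x ^ (a-2) * Fint α x ^ j) :=
    (cont_cos_rpow (by linarith)).mul (hFc.pow j)
  have hcont2 : Continuous (fun x => Real.cos x ^ (a+2*α) * Fint α x ^ (j-2)) :=
    (cont_cos_rpow (by linarith)).mul (hFc.pow (j-2))
  have hgcont : Continuous g :=
    (continuous_const.mul ((Real.continuous_sin.mul (cont_cos_rpow (by linarith : (0:ℝ) ≤ a-1))).mul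
        (hFc.pow j))).add
      (continuous_const.mul ((cont_cos_rpow (by linarith : (0:ℝ) ≤ a+α)).mul (hFc.pow (j-1))))
  have hg'cont : Continuous g' :=
    ((continuous_const.mul hcont1).sub (continuous_const.mul hcont0)).add
      (continuous_const.mul hcont2)
  have hderiv : ∀ x ∈ Set.Ioo (-(π/2)) (π/2), HasDerivAt g (g' x) x := by
    intro x hx
    have hc : 0 < Real.cos x := Real.cos_pos_of_mem_Ioo hx
    have hF := Fint_hasDerivAt α hα x
    have hFj : HasDerivAt (fun x => Fint α x ^ j)
        ((j : ℝ) * Fint α x ^ (j-1) * Real.cos x ^ α) x := hF.pow j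
    have hFj1 : HasDerivAt (fun x => Fint α x ^ (j-1))
        (((j-1 : ℕ) : ℝ) * Fint α x ^ (j-2) * Real.cos x ^ α) x := by
      have := hF.pow (j-1)
      simp only [Nat.sub_sub] at this; exact this
    have hcp : ∀ p : ℝ, HasDerivAt (fun x => Real.cos x ^ p)
        ((p * Real.cos x ^ (p-1)) * (-Real.sin x)) x := fun p =>
      (Real.hasDerivAt_rpow_const (Or.inl hc.ne')).comp x (Real.hasDerivAt_cos x)
    have h1 := ((Real.hasDerivAt_sin x).mul (hcp (a-1))).mul hFj
    have h2 := (hcp (a+α)).mul hFj1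
    have hG := (h1.const_mul (a+α)).add (h2.const_mul (j : ℝ))
    refine hG.congr_deriv (Eq.symm ?_)
    have e : ∀ p q : ℝ, Real.cos x ^ (p+q) = Real.cos x ^ p * Real.cos x ^ q :=
      fun p q => Real.rpow_add hc p q
    have h1e : Real.cos x ^ (a-1-1) = Real.cos x ^ (a-2) := by
      conv_lhs => rw [show a-1-1 = a-2 from by ring]
    have h2e : Real.cos x ^ (a-1) = Real.cos x ^ (a-2) * Real.cos x := by
      conv_lhs => rw [show a-1 = (a-2)+1 from by ring]
      rw [e, Real.rpow_one]
    have h3e : Real.cos x ^ a = Real.cos x ^ (a-2) * Real.cos x * Real.cos x := by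
      conv_lhs => rw [show a = ((a-2)+1)+1 from by ring]
      rw [e, e, Real.rpow_one]
    have h4e : Real.cos x ^ (a+α) = Real.cos x ^ (a-2) * Real.cos x * Real.cos x * Real.cos x ^ α := by
      conv_lhs => rw [show a+α = (((a-2)+1)+1)+α from by ring]
      rw [e, e, e, Real.rpow_one]
    have h5e : Real.cos x ^ (a+α-1) = Real.cos x ^ (a-2) * Real.cos x * Real.cos x ^ α := by
      conv_lhs => rw [show a+α-1 = ((a-2)+1)+α from by ring]
      rw [e, e, Real.rpow_one]
    have h6e : Real.cos x ^ (a+2*α) =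
        Real.cos x ^ (a-2) * Real.cos x * Real.cos x * Real.cos x ^ α * Real.cos x ^ α := by
      conv_lhs => rw [show a+2*α = ((((a-2)+1)+1)+α)+α from by ring]
      rw [e, e, e, e, Real.rpow_one]
    simp only [hg'_def, Pi.mul_apply, h1e, h2e, h3e, h4e, h5e, h6e]
    linear_combination ((a+α)*(a-1)*(Real.cos x^(a-2)*Fint α x^j)) * Real.sin_sq_add_cos_sq x
  have hFTC := intervalIntegral.integral_eq_sub_of_hasDerivAt_of_le hπ
    hgcont.continuousOn hderiv (hg'cont.intervalIntegrable _ _)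
  have hend : g (π/2) = 0 ∧ g (-(π/2)) = 0 := by
    constructor <;>
      simp [hg_def, Real.cos_pi_div_two, Real.cos_neg,
        Real.zero_rpow (ne_of_gt (by linarith : (0:ℝ) < a-1)),
        Real.zero_rpow (ne_of_gt (by linarith : (0:ℝ) < a+α))]
  have hzero : (∫ x in (-(π/2))..(π/2), g' x) = 0 := by
    rw [hFTC, hend.1, hend.2, sub_zero]
  simp only [hg'_def] at hzero
  rw [intervalIntegral.integral_add ((((hcont1.intervalIntegrable _ _).const_mul _).sub
        ((hcont0.intervalIntegrable _ _).const_mul _)))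
      ((hcont2.intervalIntegrable _ _).const_mul _),
    intervalIntegral.integral_sub ((hcont1.intervalIntegrable _ _).const_mul _)
      ((hcont0.intervalIntegrable _ _).const_mul _),
    intervalIntegral.integral_const_mul, intervalIntegral.integral_const_mul,
    intervalIntegral.integral_const_mul] at hzero
  linarith [hzero]


/-- `B{ν,κ} = (α^(ν-κ)/(Γ(κ)(ν-κ)!)) ∫_{-π/2}^{π/2} (cos x)^(ακ) F(x)^(ν-κ) dx`
for `ν - κ ∈ ℕ₀`, and `0` when `ν - κ` is a negative integer. -/
noncomputable def Bint (α ν κ : ℝ) : ℝ :=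
  if ν - κ < 0 then 0
  else
    α ^ (ν - κ) / (Real.Gamma κ * (Nat.factorial ⌊ν - κ⌋₊)) *
      ∫ x in (-(π / 2))..(π / 2), (Real.cos x) ^ (α * κ) * (Fint α x) ^ (⌊ν - κ⌋₊ : ℕ)

theorem Bint_recurrence (α ν κ : ℝ) (hα : 0 < α)
    (hνκ : ∃ j : ℕ, ν - κ = j) (hκ : 0 < κ) (hκα : 0 < κ - 2 / α) :
    Bint α ν (κ + 2) + Bint α ν κ =
      ((κ - 1 / α) * Real.Gamma (κ - 2 / α) / Real.Gamma (κ + 1)) *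
        Bint α (ν - 2 / α) (κ - 2 / α) := by
  obtain ⟨j, hj⟩ := hνκ
  have hα' : α ≠ 0 := hα.ne'
  have e0 : α * (κ - 2/α) = α * κ - 2 := by field_simp
  have ha : 2 < α * κ := by
    have h2' := mul_pos hα hκα
    rw [e0] at h2'; linarith
  have e2 : α * (κ + 2) = α * κ + 2 * α := by ring
  have hΓκpos := Real.Gamma_pos_of_pos hκ
  have hΓapos := Real.Gamma_pos_of_pos hκα
  have hΓκ1 : Real.Gamma (κ + 1) = κ * Real.Gamma κ := Real.Gamma_add_one hκ.ne'
  have hΓκ2 : Real.Gamma (κ + 2) = (κ + 1) * (κ * Real.Gamma κ) := by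
    rw [show (κ:ℝ) + 2 = (κ + 1) + 1 by ring, Real.Gamma_add_one (by positivity), hΓκ1]
  have hsub : ν - 2/α - (κ - 2/α) = (j : ℝ) := by linarith
  have h1 : (α*κ-1) ≠ 0 := by linarith
  have h2 : (α*κ+α) ≠ 0 := by positivity
  have hΓ : Real.Gamma κ ≠ 0 := hΓκpos.ne'
  have hκ' : κ ≠ 0 := hκ.ne'
  have K := key α (α * κ) hα ha j
  set I0 := ∫ x in (-(π/2))..(π/2), Real.cos x ^ (α*κ-2) * Fint α x ^ j with hI0def
  set I1 := ∫ x in (-(π/2))..(π/2), Real.cos x ^ (α*κ) * Fint α x ^ j with hI1def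
  set I2 := ∫ x in (-(π/2))..(π/2), Real.cos x ^ (α*κ+2*α) * Fint α x ^ (j-2) with hI2def
  have hI0 : I0 = (α*κ)/(α*κ-1) * I1
      + ((j:ℝ) * ((j-1 : ℕ):ℝ)) / ((α*κ-1)*(α*κ+α)) * I2 := by
    field_simp
    linear_combination K
  have hRHS : Bint α (ν - 2/α) (κ - 2/α) =
      α ^ j / (Real.Gamma (κ - 2/α) * (Nat.factorial j)) * I0 := by
    rw [Bint, if_neg (by rw [hsub]; exact not_lt.2 (Nat.cast_nonneg j)), hsub,
      Nat.floor_natCast, e0, Real.rpow_natCast]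
  have hBκ : Bint α ν κ = α ^ j / (Real.Gamma κ * (Nat.factorial j)) * I1 := by
    rw [Bint, if_neg (by rw [hj]; exact not_lt.2 (Nat.cast_nonneg j)), hj,
      Nat.floor_natCast, Real.rpow_natCast]
  rw [hRHS, hBκ, hI0, hΓκ1]
  set G := Real.Gamma (κ - 2/α) with hGdef
  have hG : G ≠ 0 := hΓapos.ne'
  have h1' : κ * α - 1 ≠ 0 := by intro h; apply h1; linarith
  have h1'' : α * κ - 1 ≠ 0 := h1
  match j, hj with
  | 0, hj =>
    rw [Bint, if_pos (by push_cast at hj; linarith)]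
    push_cast
    field_simp
    ring
  | 1, hj =>
    rw [Bint, if_pos (by push_cast at hj; linarith)]
    push_cast
    field_simp
    ring
  | (m+2), hj =>
    have hm : ν - (κ + 2) = ((m : ℕ) : ℝ) := by push_cast at hj ⊢; linarith
    rw [Bint, if_neg (by rw [hm]; exact not_lt.2 (Nat.cast_nonneg m)), hm,
      Nat.floor_natCast, e2, Real.rpow_natCast, hΓκ2]
    have hIeq : I2 = ∫ x in (-(π/2))..(π/2), Real.cos x ^ (α*κ+2*α) * Fint α x ^ m := by
      rw [hI2def]; norm_num
    rw [← hIeq]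
    have hfac : ((Nat.factorial (m+2) : ℕ) : ℝ) = (m+2) * ((m+1) * Nat.factorial m) := by
      rw [Nat.factorial_succ, Nat.factorial_succ]; push_cast; ring
    have h3 : ((Nat.factorial m : ℕ):ℝ) ≠ 0 := by positivity
    push_cast [hfac]
    field_simp
    ring
end

section
/- Let α > 0 and let A(ν,κ) and B(ν,κ) be real-valued functions defined for pairs (ν,κ) of reals with ν − κ ∈ ℕ₀, extended by A(ν,κ) = B(ν,κ) = 0 when ν − κ is a negative integer, and satisfying: B(ν,κ+2) + B(ν,κ) = ((κ − 1/α)·Γ(κ − 2/α)/Γ(κ+1)) · B(ν − 2/α, κ − 2/α) and A(ν−2,κ) + A(ν,κ) = ((ν + 1/α)·Γ(ν)/Γ(ν + 2/α + 1)) · A(ν + 2/α, κ + 2/α), for all admissible arguments. Then for all reals n, d, k with n − d ∈ ℕ₀ and d − k ∈ ℕ₀: ∑_{s even, 0 ≤ s ≤ d−k, m := d−s} B(n,m)·((m + 1/α)·Γ(m)/Γ(m + 1 + 2/α))·A(m + 2/α, k + 2/α) = ∑_{q even, 0 ≤ q ≤ d−k} B(n − q/α, d − q − q/α)·A(d − q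 − q/α, k − q/α). -/
open Real

private lemma sum_even_range (m : ℕ) (f : ℕ → ℝ) :
    ∑ s ∈ (Finset.range (m + 1)).filter (fun s => Even s), f s
      = ∑ t ∈ Finset.range (m / 2 + 1), f (2 * t) := by
  refine Finset.sum_nbij' (fun s => s / 2) (fun t => 2 * t) ?_ ?_ ?_ ?_ ?_ <;>
    intro x hx <;>
    simp only [Finset.mem_filter, Finset.mem_range, Nat.even_iff] at hx ⊢ <;>
    first
      | omega
      | (congr 1; omega)

private lemma beta_key (α : ℝ)
    (A B : ℝ → ℝ → ℝ)
    (hA0 : ∀ ν κ : ℝ, (∃ j : ℤ, ν - κ = j ∧ j < 0) → A ν κ = 0)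
    (hB : ∀ ν κ : ℝ, (∃ j : ℤ, ν - κ = j) →
      B ν (κ + 2) + B ν κ =
        (κ - 1 / α) * Real.Gamma (κ - 2 / α) / Real.Gamma (κ + 1) *
          B (ν - 2 / α) (κ - 2 / α))
    (hA : ∀ ν κ : ℝ, (∃ j : ℤ, ν - κ = j) →
      A (ν - 2) κ + A ν κ =
        (ν + 1 / α) * Real.Gamma ν / Real.Gamma (ν + 2 / α + 1) *
          A (ν + 2 / α) (κ + 2 / α))
    (b : ℕ) :
    ∀ n d k : ℝ, ∀ a : ℕ, n - d = a → d - k = b →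
    ∑ t ∈ Finset.range (b / 2 + 1),
        B n (d - 2 * t) *
          ((d - 2 * t + 1 / α) * Real.Gamma (d - 2 * t) /
            Real.Gamma (d - 2 * t + 1 + 2 / α)) *
          A (d - 2 * t + 2 / α) (k + 2 / α) =
    ∑ t ∈ Finset.range (b / 2 + 1),
        B (n - 2 * t / α) (d - 2 * t - 2 * t / α) *
          A (d - 2 * t - 2 * t / α) (k - 2 * t / α) := by
  induction b using Nat.twoStepInduction with
  | zero =>
    intro n d k a hnd hdk
    push_cast at hdk
    have h01 : (0:ℕ)/2+1 = 1 := by norm_num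
    rw [h01, Finset.sum_range_one, Finset.sum_range_one]
    simp only [Nat.cast_zero, mul_zero, zero_div, sub_zero]
    have hz : A (d - 2) k = 0 := hA0 _ _ ⟨-2, by push_cast; linarith, by norm_num⟩
    have h := hA d k ⟨0, by push_cast; linarith⟩
    rw [hz, zero_add] at h
    have e : d + 1 + 2 / α = d + 2 / α + 1 := by ring
    rw [e, mul_assoc, ← h]
  | one =>
    intro n d k a hnd hdk
    push_cast at hdk
    have h01 : (1:ℕ)/2+1 = 1 := by norm_num
    rw [h01, Finset.sum_range_one, Finset.sum_range_one]
    simp only [Nat.cast_zero, mul_zero, zero_div, sub_zero]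
    have hz : A (d - 2) k = 0 := hA0 _ _ ⟨-1, by push_cast; linarith, by norm_num⟩
    have h := hA d k ⟨1, by push_cast; linarith⟩
    rw [hz, zero_add] at h
    have e : d + 1 + 2 / α = d + 2 / α + 1 := by ring
    rw [e, mul_assoc, ← h]
  | more b ih _ =>
    intro n d k a hnd hdk
    have hdiv : (b + 2) / 2 + 1 = (b / 2 + 1) + 1 := by omega
    rw [hdiv]
    push_cast at hdk
    have ihh := ih (n - 2 / α) (d - 2 - 2 / α) (k - 2 / α) (a + 2)
      (by push_cast; linarith) (by push_cast; linarith)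
    have hz : A (d - 2 * ((b / 2 + 1 : ℕ) : ℝ) - 2) k = 0 := by
      rcases (by omega : b = 2 * (b / 2) ∨ b = 2 * (b / 2) + 1) with hb | hb
      · refine hA0 _ _ ⟨-2, ?_, by norm_num⟩
        have hbR : (b : ℝ) = 2 * ((b / 2 : ℕ) : ℝ) := by exact_mod_cast hb
        push_cast
        linarith
      · refine hA0 _ _ ⟨-1, ?_, by norm_num⟩
        have hbR : (b : ℝ) = 2 * ((b / 2 : ℕ) : ℝ) + 1 := by exact_mod_cast hb
        push_cast
        linarith
    calc
      ∑ t ∈ Finset.range (b / 2 + 1 + 1),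
          B n (d - 2 * t) *
            ((d - 2 * t + 1 / α) * Real.Gamma (d - 2 * t) /
              Real.Gamma (d - 2 * t + 1 + 2 / α)) *
            A (d - 2 * t + 2 / α) (k + 2 / α)
        = ∑ t ∈ Finset.range (b / 2 + 1 + 1),
            (B n (d - 2 * t) * A (d - 2 * (t : ℝ)) k
              + B n (d - 2 * t) * A (d - 2 * (t : ℝ) - 2) k) := by
          refine Finset.sum_congr rfl fun t _ => ?_
          have h := hA (d - 2 * t) k ⟨(b : ℤ) + 2 - 2 * t, by push_cast; linarith⟩
          have e : d - 2 * (t : ℝ) + 1 + 2 / α = d - 2 * t + 2 / α + 1 := by ring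
          rw [e, mul_assoc, ← h]
          ring
      _ = B n d * A d k + ∑ t ∈ Finset.range (b / 2 + 1),
            (B n (d - 2 * ((t + 1 : ℕ) : ℝ)) * A (d - 2 * ((t + 1 : ℕ) : ℝ)) k
              + B n (d - 2 * t) * A (d - 2 * (t : ℝ) - 2) k) := by
          simp only [Finset.sum_add_distrib,
            Finset.sum_range_succ'
              (fun t : ℕ => B n (d - 2 * t) * A (d - 2 * (t : ℝ)) k) (b / 2 + 1),
            Finset.sum_range_succ
              (fun t : ℕ => B n (d - 2 * t) * A (d - 2 * (t : ℝ) - 2) k) (b / 2 + 1),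
            hz, mul_zero, add_zero]
          push_cast
          norm_num
          ring
      _ = B n d * A d k + ∑ t ∈ Finset.range (b / 2 + 1),
            B (n - 2 / α) (d - 2 - 2 / α - 2 * t) *
              ((d - 2 - 2 / α - 2 * t + 1 / α) * Real.Gamma (d - 2 - 2 / α - 2 * t) /
                Real.Gamma (d - 2 - 2 / α - 2 * t + 1 + 2 / α)) *
              A (d - 2 - 2 / α - 2 * t + 2 / α) (k - 2 / α + 2 / α) := by
          refine congrArg _ (Finset.sum_congr rfl fun t _ => ?_)
          have h := hB n (d - 2 * t - 2) ⟨(a : ℤ) + 2 * t + 2, by push_cast; linarith⟩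
          rw [show d - 2 * (t : ℝ) - 2 + 2 = d - 2 * t from by ring] at h
          push_cast
          rw [show d - 2 * ((t : ℝ) + 1) = d - 2 * t - 2 from by ring,
            show d - 2 - 2 / α - 2 * (t : ℝ) + 1 / α = d - 2 * t - 2 - 1 / α from by ring,
            show d - 2 - 2 / α - 2 * (t : ℝ) + 1 + 2 / α = d - 2 * t - 2 + 1 from by ring,
            show d - 2 - 2 / α - 2 * (t : ℝ) + 2 / α = d - 2 * t - 2 from by ring,
            show k - 2 / α + 2 / α = k from by ring,
            show d - 2 - 2 / α - 2 * (t : ℝ) = d - 2 * t - 2 - 2 / α from by ring]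
          linear_combination A (d - 2 * (t : ℝ) - 2) k * h
      _ = B n d * A d k + ∑ t ∈ Finset.range (b / 2 + 1),
            B (n - 2 / α - 2 * t / α) (d - 2 - 2 / α - 2 * t - 2 * t / α) *
              A (d - 2 - 2 / α - 2 * t - 2 * t / α) (k - 2 / α - 2 * t / α) := by
          rw [ihh]
      _ = ∑ t ∈ Finset.range (b / 2 + 1 + 1),
            B (n - 2 * t / α) (d - 2 * t - 2 * t / α) *
              A (d - 2 * t - 2 * t / α) (k - 2 * t / α) := by
          rw [Finset.sum_range_succ'
            (fun t : ℕ => B (n - 2 * t / α) (d - 2 * t - 2 * t / α) *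
              A (d - 2 * (t : ℝ) - 2 * t / α) (k - 2 * t / α)) (b / 2 + 1)]
          rw [add_comm]
          congr 1
          · refine Finset.sum_congr rfl fun t _ => ?_
            push_cast
            rw [show n - 2 / α - 2 * (t : ℝ) / α = n - 2 * (t + 1) / α from by ring,
              show d - 2 - 2 / α - 2 * (t : ℝ) - 2 * t / α
                  = d - 2 * (t + 1) - 2 * (t + 1) / α from by ring,
              show k - 2 / α - 2 * (t : ℝ) / α = k - 2 * (t + 1) / α from by ring]
          · norm_num

theorem beta_main_identity (α : ℝ) (hα : 0 < α)
    (A B : ℝ → ℝ → ℝ)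
    (hA0 : ∀ ν κ : ℝ, (∃ j : ℤ, ν - κ = j ∧ j < 0) → A ν κ = 0)
    (hB0 : ∀ ν κ : ℝ, (∃ j : ℤ, ν - κ = j ∧ j < 0) → B ν κ = 0)
    (hB : ∀ ν κ : ℝ, (∃ j : ℤ, ν - κ = j) →
      B ν (κ + 2) + B ν κ =
        (κ - 1 / α) * Real.Gamma (κ - 2 / α) / Real.Gamma (κ + 1) *
          B (ν - 2 / α) (κ - 2 / α))
    (hA : ∀ ν κ : ℝ, (∃ j : ℤ, ν - κ = j) →
      A (ν - 2) κ + A ν κ =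
        (ν + 1 / α) * Real.Gamma ν / Real.Gamma (ν + 2 / α + 1) *
          A (ν + 2 / α) (κ + 2 / α))
    (n d k : ℝ) (a b : ℕ) (hnd : n - d = a) (hdk : d - k = b) :
    ∑ s ∈ (Finset.range (b + 1)).filter (fun s => Even s),
        B n (d - s) *
          ((d - s + 1 / α) * Real.Gamma (d - s) / Real.Gamma (d - s + 1 + 2 / α)) *
          A (d - s + 2 / α) (k + 2 / α) =
    ∑ q ∈ (Finset.range (b + 1)).filter (fun q => Even q),
        B (n - q / α) (d - q - q / α) * A (d - q - q / α) (k - q / α) := by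
  rw [sum_even_range b (fun s : ℕ => B n (d - s) *
        ((d - s + 1 / α) * Real.Gamma (d - s) / Real.Gamma (d - s + 1 + 2 / α)) *
        A (d - s + 2 / α) (k + 2 / α)),
    sum_even_range b (fun q : ℕ => B (n - q / α) (d - q - q / α) *
        A (d - q - q / α) (k - q / α))]
  have key := beta_key α A B hA0 hB hA b n d k a hnd hdk
  push_cast at key ⊢
  convert key using 2
end

section
/- Let (A(n,k)) and (B(n,k)) be real arrays (A(n,k) defined for n ∈ ℕ₀, k ∈ ℤ, k ≤ n; B(n,k) for n ∈ ℕ, k ∈ ℕ₀, k ≤ n; both zero for k > n) satisfying A(n+2,k) − A(n,k) = (n+1)²·A(n,k−2) and B(n,k) − B(n,k+2) = (k+1)²·B(n+2,k+2). Suppose additionally that for all n ≥ 1 and 1 ≤ k ≤ n−1: ∑_{j even, k ≤ j ≤ n} B(n,j)·(j−1)²·A(j−2,k−2) = π^{n−k}/(n−k)! and ∑_{j odd, k ≤ j ≤ n} B(n,j)·(j−1)²·A(j−2,k−2) = π^{n−k}/(n−k)! (with the convention 0²·A(−1,−1) := A(1,1)). Then for all d ≥ 1 and ℓ ≥ 1: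 ∑_{r even, d ≤ r ≤ d+ℓ} B(r,d)·A(d, r−ℓ) = π^ℓ/ℓ! and ∑_{r odd, d ≤ r ≤ d+ℓ} B(r,d)·A(d, r−ℓ) = π^ℓ/ℓ!. -/
open scoped Real

lemma keyG (A : ℕ → ℤ → ℝ) (B : ℕ → ℕ → ℝ)
    (hA0 : ∀ (n : ℕ) (k : ℤ), (n : ℤ) < k → A n k = 0)
    (hB0 : ∀ n k : ℕ, n < k → B n k = 0)
    (hA : ∀ (n : ℕ) (k : ℤ), A (n + 2) k - A n k = ((n : ℝ) + 1) ^ 2 * A n (k - 2))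
    (hB : ∀ n k : ℕ, 1 ≤ n → B n k - B n (k + 2) = ((k : ℝ) + 1) ^ 2 * B (n + 2) (k + 2))
    (d : ℕ) (hd : 1 ≤ d) :
    ∀ n : ℕ, ∀ t : ℤ,
      ∑ j ∈ (Finset.Icc (d+2) n).filter (fun j => j % 2 = d % 2),
        B n j * ((j : ℝ) - 1) ^ 2 * A (j - 2) t
      = ∑ r ∈ (Finset.Icc d (n-2)).filter (fun r => r % 2 = n % 2),
        B r d * A d (t - n + 2 + r) := by
  intro n
  induction n using Nat.strong_induction_on with
  | _ n IH =>
  intro t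
  by_cases hn : n < d + 2
  · rw [Finset.Icc_eq_empty (by omega), Finset.Icc_eq_empty (by omega)]
    simp
  · push_neg at hn
    have stepA : ∀ j ∈ (Finset.Icc (d+2) n).filter (fun j => j % 2 = d % 2),
        B n j * ((j : ℝ) - 1) ^ 2 * A (j - 2) t
          = (B (n-2) (j-2) - B (n-2) j) * A (j - 2) t := by
      intro j hj
      simp only [Finset.mem_filter, Finset.mem_Icc] at hj
      have h1 : 1 ≤ n - 2 := by omega
      have hb := hB (n-2) (j-2) h1
      rw [show j - 2 + 2 = j by omega, show n - 2 + 2 = n by omega] at hb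
      have e3 : ((j - 2 : ℕ) : ℝ) + 1 = (j : ℝ) - 1 := by
        rw [Nat.cast_sub (by omega : 2 ≤ j)]; push_cast; ring
      rw [e3] at hb
      rw [hb]; ring
    rw [Finset.sum_congr rfl stepA]
    simp only [sub_mul]
    rw [Finset.sum_sub_distrib]
    have hS2 : ∑ j ∈ (Finset.Icc (d+2) n).filter (fun j => j % 2 = d % 2),
        B (n-2) (j-2) * A (j-2) t
        = ∑ r ∈ (Finset.Icc d (n-2)).filter (fun r => r % 2 = d % 2),
          B (n-2) r * A r t := by
      apply Finset.sum_nbij' (fun j => j - 2) (fun r => r + 2)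
      · intro a ha; simp only [Finset.mem_filter, Finset.mem_Icc] at ha ⊢; omega
      · intro a ha; simp only [Finset.mem_filter, Finset.mem_Icc] at ha ⊢; omega
      · intro a ha; simp only [Finset.mem_filter, Finset.mem_Icc] at ha; omega
      · intro a ha; simp only [Finset.mem_filter, Finset.mem_Icc] at ha; omega
      · intro a ha; rfl
    have hS3 : ∑ j ∈ (Finset.Icc (d+2) n).filter (fun j => j % 2 = d % 2),
        B (n-2) j * A (j-2) t
        = ∑ j ∈ (Finset.Icc (d+2) (n-2)).filter (fun j => j % 2 = d % 2),
          B (n-2) j * A (j-2) t := by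
      symm
      apply Finset.sum_subset
      · apply Finset.filter_subset_filter
        exact Finset.Icc_subset_Icc_right (by omega)
      · intro x hx hnx
        simp only [Finset.mem_filter, Finset.mem_Icc] at hx hnx
        rw [hB0 (n-2) x (by omega), zero_mul]
    rw [hS2, hS3]
    have hsplit : (Finset.Icc d (n-2)).filter (fun r => r % 2 = d % 2)
        = insert d ((Finset.Icc (d+2) (n-2)).filter (fun r => r % 2 = d % 2)) := by
      ext a
      simp only [Finset.mem_insert, Finset.mem_filter, Finset.mem_Icc]
      omega
    rw [hsplit, Finset.sum_insert (by
      simp only [Finset.mem_filter, Finset.mem_Icc]; omega)]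
    have hcomb : B (n-2) d * A d t +
        ∑ r ∈ (Finset.Icc (d+2) (n-2)).filter (fun r => r % 2 = d % 2), B (n-2) r * A r t
        - ∑ j ∈ (Finset.Icc (d+2) (n-2)).filter (fun j => j % 2 = d % 2),
            B (n-2) j * A (j-2) t
        = B (n-2) d * A d t +
          ∑ j ∈ (Finset.Icc (d+2) (n-2)).filter (fun j => j % 2 = d % 2),
            B (n-2) j * ((j : ℝ) - 1) ^ 2 * A (j-2) (t-2) := by
      rw [add_sub_assoc, ← Finset.sum_sub_distrib]
      congr 1
      apply Finset.sum_congr rfl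
      intro j hj
      simp only [Finset.mem_filter, Finset.mem_Icc] at hj
      have ha := hA (j-2) t
      rw [show j - 2 + 2 = j by omega] at ha
      have e3 : ((j - 2 : ℕ) : ℝ) + 1 = (j : ℝ) - 1 := by
        rw [Nat.cast_sub (by omega : 2 ≤ j)]; push_cast; ring
      rw [e3] at ha
      rw [mul_assoc, ← ha]; ring
    rw [hcomb, IH (n-2) (by omega) (t-2)]
    have hsplit2 : (Finset.Icc d (n-2)).filter (fun r => r % 2 = n % 2)
        = insert (n-2) ((Finset.Icc d (n-2-2)).filter (fun r => r % 2 = (n-2) % 2)) := by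
      ext a
      simp only [Finset.mem_insert, Finset.mem_filter, Finset.mem_Icc]
      omega
    rw [hsplit2, Finset.sum_insert (by
      simp only [Finset.mem_filter, Finset.mem_Icc]; omega)]
    have e1 : t - (n:ℤ) + 2 + ((n-2 : ℕ) : ℤ) = t := by
      rw [Nat.cast_sub (by omega : 2 ≤ n)]; push_cast; ring
    rw [e1]
    congr 1
    apply Finset.sum_congr rfl
    intro r hr
    simp only [Finset.mem_filter, Finset.mem_Icc] at hr
    congr 1
    rw [Nat.cast_sub (by omega : 2 ≤ n)]; push_cast; ring

section
variable (A : ℕ → ℤ → ℝ) (B : ℕ → ℕ → ℝ)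

lemma lhsEval
    (hA0 : ∀ (n : ℕ) (k : ℤ), (n : ℤ) < k → A n k = 0)
    (hsum_even : ∀ n k : ℕ, 1 ≤ n → 1 ≤ k → k + 1 ≤ n →
      ∑ j ∈ (Finset.Icc k n).filter (fun j => Even j),
          (if j = 1 then B n 1 * A 1 1
           else B n j * ((j : ℝ) - 1) ^ 2 * A (j - 2) ((k : ℤ) - 2)) =
        π ^ (n - k) / (n - k).factorial)
    (hsum_odd : ∀ n k : ℕ, 1 ≤ n → 1 ≤ k → k + 1 ≤ n →
      ∑ j ∈ (Finset.Icc k n).filter (fun j => Odd j),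
          (if j = 1 then B n 1 * A 1 1
           else B n j * ((j : ℝ) - 1) ^ 2 * A (j - 2) ((k : ℤ) - 2)) =
        π ^ (n - k) / (n - k).factorial)
    (d ℓ n k' : ℕ) (hd : 1 ≤ d) (hl : 1 ≤ ℓ)
    (hk : k' = d + 2 ∨ k' = d + 3) (hn : n = k' + ℓ) :
    ∑ j ∈ (Finset.Icc (d+2) n).filter (fun j => j % 2 = d % 2),
        B n j * ((j : ℝ) - 1) ^ 2 * A (j - 2) ((k' : ℤ) - 2)
      = π ^ ℓ / ℓ.factorial := by
  have key : ∑ j ∈ (Finset.Icc k' n).filter (fun j => j % 2 = d % 2),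
      B n j * ((j : ℝ) - 1) ^ 2 * A (j - 2) ((k' : ℤ) - 2) = π ^ ℓ / ℓ.factorial := by
    have hmain : ∀ (p : ℕ → Prop) (_ : DecidablePred p),
        (∀ j, p j ↔ j % 2 = d % 2) →
        (∑ j ∈ (Finset.Icc k' n).filter p,
          (if j = 1 then B n 1 * A 1 1
           else B n j * ((j : ℝ) - 1) ^ 2 * A (j - 2) ((k' : ℤ) - 2))) =
        ∑ j ∈ (Finset.Icc k' n).filter (fun j => j % 2 = d % 2),
          B n j * ((j : ℝ) - 1) ^ 2 * A (j - 2) ((k' : ℤ) - 2) := by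
      intro p _ hp
      rw [show (Finset.Icc k' n).filter p
          = (Finset.Icc k' n).filter (fun j => j % 2 = d % 2) by
        ext a; simp only [Finset.mem_filter, hp]]
      apply Finset.sum_congr rfl
      intro j hj
      simp only [Finset.mem_filter, Finset.mem_Icc] at hj
      rw [if_neg (by omega)]
    rcases Nat.even_or_odd d with hde | hdo
    · have hs := hsum_even n k' (by omega) (by omega) (by omega)
      rw [show n - k' = ℓ by omega] at hs
      rw [← hs]
      symm
      exact hmain (fun j => Even j) inferInstance
        (by intro j; simp only [Nat.even_iff] at hde ⊢; omega)
    · have hs := hsum_odd n k' (by omega) (by omega) (by omega)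
      rw [show n - k' = ℓ by omega] at hs
      rw [← hs]
      symm
      exact hmain (fun j => Odd j) inferInstance
        (by intro j; simp only [Nat.odd_iff] at hdo ⊢; omega)
  rcases hk with hk | hk
  · rw [← key, hk]
  · rw [← key]
    symm
    apply Finset.sum_subset
    · apply Finset.filter_subset_filter
      exact Finset.Icc_subset_Icc_left (by omega)
    · intro x hx hnx
      simp only [Finset.mem_filter, Finset.mem_Icc] at hx hnx
      have hx2 : x = d + 2 := by omega
      have : A (x - 2) ((k' : ℤ) - 2) = 0 := by
        apply hA0
        rw [hx2, hk]
        push_cast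
        omega
      rw [this, mul_zero]

end

section
variable (A : ℕ → ℤ → ℝ) (B : ℕ → ℕ → ℝ)

lemma finalEval
    (hA0 : ∀ (n : ℕ) (k : ℤ), (n : ℤ) < k → A n k = 0)
    (hB0 : ∀ n k : ℕ, n < k → B n k = 0)
    (hA : ∀ (n : ℕ) (k : ℤ), A (n + 2) k - A n k = ((n : ℝ) + 1) ^ 2 * A n (k - 2))
    (hB : ∀ n k : ℕ, 1 ≤ n → B n k - B n (k + 2) = ((k : ℝ) + 1) ^ 2 * B (n + 2) (k + 2))
    (hsum_even : ∀ n k : ℕ, 1 ≤ n → 1 ≤ k → k + 1 ≤ n →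
      ∑ j ∈ (Finset.Icc k n).filter (fun j => Even j),
          (if j = 1 then B n 1 * A 1 1
           else B n j * ((j : ℝ) - 1) ^ 2 * A (j - 2) ((k : ℤ) - 2)) =
        π ^ (n - k) / (n - k).factorial)
    (hsum_odd : ∀ n k : ℕ, 1 ≤ n → 1 ≤ k → k + 1 ≤ n →
      ∑ j ∈ (Finset.Icc k n).filter (fun j => Odd j),
          (if j = 1 then B n 1 * A 1 1
           else B n j * ((j : ℝ) - 1) ^ 2 * A (j - 2) ((k : ℤ) - 2)) =
        π ^ (n - k) / (n - k).factorial)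
    (d ℓ n k' : ℕ) (hd : 1 ≤ d) (hl : 1 ≤ ℓ)
    (hk : k' = d + 2 ∨ k' = d + 3) (hn : n = k' + ℓ) :
    ∑ r ∈ (Finset.Icc d (d + ℓ)).filter (fun r => r % 2 = n % 2),
        B r d * A d ((r : ℤ) - ℓ) = π ^ ℓ / ℓ.factorial := by
  have hkey := keyG A B hA0 hB0 hA hB d hd n ((k' : ℤ) - 2)
  have harg : ∀ r : ℕ, ((k' : ℤ) - 2) - n + 2 + r = (r : ℤ) - ℓ := by
    intro r; subst hn; push_cast; ring
  rw [Finset.sum_congr rfl (fun r _ => by rw [harg r] :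
    ∀ r ∈ (Finset.Icc d (n-2)).filter (fun r => r % 2 = n % 2),
      B r d * A d (((k' : ℤ) - 2) - n + 2 + r) = B r d * A d ((r : ℤ) - ℓ))] at hkey
  rw [← lhsEval A B hA0 hsum_even hsum_odd d ℓ n k' hd hl hk hn, hkey]
  rcases hk with hk | hk
  · rw [show n - 2 = d + ℓ by omega]
  · apply Finset.sum_subset
    · apply Finset.filter_subset_filter
      exact Finset.Icc_subset_Icc_right (by omega)
    · intro x hx hnx
      simp only [Finset.mem_filter, Finset.mem_Icc] at hx hnx
      rw [hA0 d ((x : ℤ) - ℓ) (by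
        have : x = d + ℓ + 1 := by omega
        subst this; push_cast; omega), mul_zero]

end

theorem sum_A_B_joint_second_argument
    (A : ℕ → ℤ → ℝ) (B : ℕ → ℕ → ℝ)
    (hA0 : ∀ (n : ℕ) (k : ℤ), (n : ℤ) < k → A n k = 0)
    (hB0 : ∀ n k : ℕ, n < k → B n k = 0)
    (hA : ∀ (n : ℕ) (k : ℤ), A (n + 2) k - A n k = ((n : ℝ) + 1) ^ 2 * A n (k - 2))
    (hB : ∀ n k : ℕ, 1 ≤ n → B n k - B n (k + 2) = ((k : ℝ) + 1) ^ 2 * B (n + 2) (k + 2))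
    (hsum_even : ∀ n k : ℕ, 1 ≤ n → 1 ≤ k → k + 1 ≤ n →
      ∑ j ∈ (Finset.Icc k n).filter (fun j => Even j),
          (if j = 1 then B n 1 * A 1 1
           else B n j * ((j : ℝ) - 1) ^ 2 * A (j - 2) ((k : ℤ) - 2)) =
        π ^ (n - k) / (n - k).factorial)
    (hsum_odd : ∀ n k : ℕ, 1 ≤ n → 1 ≤ k → k + 1 ≤ n →
      ∑ j ∈ (Finset.Icc k n).filter (fun j => Odd j),
          (if j = 1 then B n 1 * A 1 1
           else B n j * ((j : ℝ) - 1) ^ 2 * A (j - 2) ((k : ℤ) - 2)) =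
        π ^ (n - k) / (n - k).factorial)
    (d ℓ : ℕ) (hd : 1 ≤ d) (hℓ : 1 ≤ ℓ) :
    (∑ r ∈ (Finset.Icc d (d + ℓ)).filter (fun r => Even r),
        B r d * A d ((r : ℤ) - ℓ) = π ^ ℓ / ℓ.factorial) ∧
    (∑ r ∈ (Finset.Icc d (d + ℓ)).filter (fun r => Odd r),
        B r d * A d ((r : ℤ) - ℓ) = π ^ ℓ / ℓ.factorial) := by
  have heven : ∀ n : ℕ, n % 2 = 0 → (n = d + ℓ + 2 ∨ n = d + ℓ + 3) →
      ∑ r ∈ (Finset.Icc d (d + ℓ)).filter (fun r => Even r),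
        B r d * A d ((r : ℤ) - ℓ) = π ^ ℓ / ℓ.factorial := by
    intro n hpar hcase
    rw [show (Finset.Icc d (d + ℓ)).filter (fun r => Even r)
        = (Finset.Icc d (d + ℓ)).filter (fun r => r % 2 = n % 2) from by
      ext a; simp only [Finset.mem_filter, Finset.mem_Icc, Nat.even_iff]; omega]
    rcases hcase with h | h
    · exact finalEval A B hA0 hB0 hA hB hsum_even hsum_odd d ℓ n (d + 2) hd hℓ
        (Or.inl rfl) (by omega)
    · exact finalEval A B hA0 hB0 hA hB hsum_even hsum_odd d ℓ n (d + 3) hd hℓ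
        (Or.inr rfl) (by omega)
  have hodd : ∀ n : ℕ, n % 2 = 1 → (n = d + ℓ + 2 ∨ n = d + ℓ + 3) →
      ∑ r ∈ (Finset.Icc d (d + ℓ)).filter (fun r => Odd r),
        B r d * A d ((r : ℤ) - ℓ) = π ^ ℓ / ℓ.factorial := by
    intro n hpar hcase
    rw [show (Finset.Icc d (d + ℓ)).filter (fun r => Odd r)
        = (Finset.Icc d (d + ℓ)).filter (fun r => r % 2 = n % 2) from by
      ext a; simp only [Finset.mem_filter, Finset.mem_Icc, Nat.odd_iff]; omega]
    rcases hcase with h | h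
    · exact finalEval A B hA0 hB0 hA hB hsum_even hsum_odd d ℓ n (d + 2) hd hℓ
        (Or.inl rfl) (by omega)
    · exact finalEval A B hA0 hB0 hA hB hsum_even hsum_odd d ℓ n (d + 3) hd hℓ
        (Or.inr rfl) (by omega)
  rcases Nat.even_or_odd (d + ℓ) with h | h
  · rw [Nat.even_iff] at h
    exact ⟨heven (d + ℓ + 2) (by omega) (Or.inl rfl),
           hodd (d + ℓ + 3) (by omega) (Or.inr rfl)⟩
  · rw [Nat.odd_iff] at h
    exact ⟨heven (d + ℓ + 3) (by omega) (Or.inr rfl),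
           hodd (d + ℓ + 2) (by omega) (Or.inl rfl)⟩
end
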